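/- arXiv:2506.23211 — 12 statements merged into one kernel-verified Lean document; each statement's English description precedes it below -/
import Mathlib

section
/- With the setup of a reductive decomposition g = h ⊕ m and a 2-cocycle symplectic tensor ω on m, the operator L^{a,b}_x is skew-symmetric with respect to ω for all x ∈ m (i.e., ω(L^{a,b}_x(y), z) = −ω(y, L^{a,b}_x(z)) for all x,y,z) if a = b. Conversely, if [m,m]_m ≠ 0 (G/H not locally symmetric in the sense that the m-component of brackets is nonzero for some pair), skew-symmetry for all x forces a = b. -/
/-- L^{a,b} is ω-skew for all x if a = b; conversely, if G/H is not
locally symmetric, skew-symmetry for all x forces a = b. -/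
theorem stmt2 {g : Type*} [LieRing g] [LieAlgebra ℝ g]
    (h m : Submodule ℝ g) (hcompl : IsCompl h m)
    (hbr : ∀ u ∈ h, ∀ x ∈ m, ⁅u, x⁆ ∈ m)
    (pm : g →ₗ[ℝ] g) (hpm_mem : ∀ x, pm x ∈ m)
    (hpm_m : ∀ x ∈ m, pm x = x) (hpm_h : ∀ x ∈ h, pm x = 0)
    (ω : g →ₗ[ℝ] g →ₗ[ℝ] ℝ)
    (hskew : ∀ x ∈ m, ∀ y ∈ m, ω x y = - ω y x)
    (hnondeg : ∀ x ∈ m, (∀ y ∈ m, ω x y = 0) → x = 0)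
    (hcocycle : ∀ x ∈ m, ∀ y ∈ m, ∀ z ∈ m,
      ω (pm ⁅x, y⁆) z + ω (pm ⁅z, x⁆) y + ω (pm ⁅y, z⁆) x = 0)
    (a b : ℝ) (L : g → g → g)
    (hLmem : ∀ x ∈ m, ∀ y ∈ m, L x y ∈ m)
    (hLdef : ∀ x ∈ m, ∀ y ∈ m, ∀ z ∈ m,
      ω (L x y) z = a * ω (pm ⁅x, y⁆) z + b * ω (pm ⁅x, z⁆) y) :
    (a = b → ∀ x ∈ m, ∀ y ∈ m, ∀ z ∈ m, ω (L x y) z = - ω y (L x z)) ∧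
    ((∃ x ∈ m, ∃ y ∈ m, pm ⁅x, y⁆ ≠ 0) →
      (∀ x ∈ m, ∀ y ∈ m, ∀ z ∈ m, ω (L x y) z = - ω y (L x z)) → a = b) := by
  constructor
  · rintro rfl x hx y hy z hz
    rw [hskew y hy (L x z) (hLmem x hx z hz), neg_neg,
      hLdef x hx y hy z hz, hLdef x hx z hz y hy]
    ring
  · rintro ⟨x0, hx0, y0, hy0, hne⟩ hsk
    obtain ⟨w, hw, hwne⟩ : ∃ w ∈ m, ω (pm ⁅x0, y0⁆) w ≠ 0 := by
      by_contra hc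
      push_neg at hc
      exact hne (hnondeg _ (hpm_mem _) hc)
    have key := hsk w hw x0 hx0 y0 hy0
    rw [hskew x0 hx0 (L w y0) (hLmem w hw y0 hy0), neg_neg,
      hLdef w hw x0 hx0 y0 hy0, hLdef w hw y0 hy0 x0 hx0] at key
    have hcoc := hcocycle x0 hx0 y0 hy0 w hw
    have hflip : ω (pm ⁅y0, w⁆) x0 = - ω (pm ⁅w, y0⁆) x0 := by
      rw [← lie_skew, map_neg, map_neg, LinearMap.neg_apply]
    rw [hflip] at hcoc
    set A := ω (pm ⁅w, x0⁆) y0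
    set B := ω (pm ⁅w, y0⁆) x0
    set C := ω (pm ⁅x0, y0⁆) w
    have hAB : A - B = -C := by linarith
    have h0 : (a - b) * (A - B) = 0 := by linear_combination key
    rcases mul_eq_zero.mp h0 with h1 | h1
    · linarith
    · exfalso; rw [hAB, neg_eq_zero] at h1; exact hwne h1
end

section
/- With the reductive setup and ω a 2-cocycle symplectic tensor on m, the connection product L^{a,b} is both torsion-free (L^{a,b}_x(y) − L^{a,b}_y(x) = [x,y]_m) and ω-skew in the second slot (ω(L^{a,b}_x(y), z) + ω(y, L^{a,b}_x(z)) = 0) for all x,y,z if and only if a = b = 1/3, provided there exist x,y ∈ m with [x,y]_m ≠ 0. -/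
/-- L^{a,b} is torsion-free and ω-skew (i.e. symplectic) iff a = b = 1/3,
provided the space is not locally symmetric. -/
theorem stmt3 {g : Type*} [LieRing g] [LieAlgebra ℝ g]
    (h m : Submodule ℝ g) (hcompl : IsCompl h m)
    (hbr : ∀ u ∈ h, ∀ x ∈ m, ⁅u, x⁆ ∈ m)
    (pm : g →ₗ[ℝ] g) (hpm_mem : ∀ x, pm x ∈ m)
    (hpm_m : ∀ x ∈ m, pm x = x) (hpm_h : ∀ x ∈ h, pm x = 0)
    (ω : g →ₗ[ℝ] g →ₗ[ℝ] ℝ)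
    (hskew : ∀ x ∈ m, ∀ y ∈ m, ω x y = - ω y x)
    (hnondeg : ∀ x ∈ m, (∀ y ∈ m, ω x y = 0) → x = 0)
    (hcocycle : ∀ x ∈ m, ∀ y ∈ m, ∀ z ∈ m,
      ω (pm ⁅x, y⁆) z + ω (pm ⁅z, x⁆) y + ω (pm ⁅y, z⁆) x = 0)
    (a b : ℝ) (L : g → g → g)
    (hLmem : ∀ x ∈ m, ∀ y ∈ m, L x y ∈ m)
    (hLdef : ∀ x ∈ m, ∀ y ∈ m, ∀ z ∈ m,
      ω (L x y) z = a * ω (pm ⁅x, y⁆) z + b * ω (pm ⁅x, z⁆) y)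
    (hns : ∃ x ∈ m, ∃ y ∈ m, pm ⁅x, y⁆ ≠ 0) :
    ((∀ x ∈ m, ∀ y ∈ m, L x y - L y x = pm ⁅x, y⁆) ∧
     (∀ x ∈ m, ∀ y ∈ m, ∀ z ∈ m, ω (L x y) z + ω y (L x z) = 0)) ↔
    (a = 1/3 ∧ b = 1/3) := by
  have hanti : ∀ x y : g, ∀ z : g, ω (pm ⁅y, x⁆) z = - ω (pm ⁅x, y⁆) z := by
    intro x y z
    rw [← lie_skew, map_neg, map_neg, LinearMap.neg_apply]
  have hid : ∀ x ∈ m, ∀ y ∈ m, ∀ z ∈ m,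
      ω (pm ⁅x, z⁆) y = ω (pm ⁅x, y⁆) z + ω (pm ⁅y, z⁆) x := by
    intro x hx y hy z hz
    have hc := hcocycle x hx y hy z hz
    have h2 := hanti z x y
    linarith
  constructor
  · rintro ⟨htf, hsk⟩
    -- 2a + b = 1
    have key1 : ∀ x ∈ m, ∀ y ∈ m, ∀ z ∈ m,
        (2 * a + b - 1) * ω (pm ⁅x, y⁆) z = 0 := by
      intro x hx y hy z hz
      have h2 : ω (L x y - L y x) z = ω (pm ⁅x, y⁆) z := by rw [htf x hx y hy]
      rw [map_sub, LinearMap.sub_apply, hLdef x hx y hy z hz, hLdef y hy x hx z hz,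
        hid x hx y hy z hz, hanti x y z] at h2
      linear_combination h2
    -- a = b
    have key2 : ∀ x ∈ m, ∀ y ∈ m, ∀ z ∈ m,
        (a - b) * ω (pm ⁅y, z⁆) x = 0 := by
      intro x hx y hy z hz
      have hE := hsk x hx y hy z hz
      rw [hskew y hy (L x z) (hLmem x hx z hz), hLdef x hx y hy z hz,
        hLdef x hx z hz y hy] at hE
      have hI := hid x hx y hy z hz
      linear_combination -hE + (b - a) * hI
    obtain ⟨x, hx, y, hy, hxy⟩ := hns
    have hex : ∃ z ∈ m, ω (pm ⁅x, y⁆) z ≠ 0 := by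
      by_contra hc
      push_neg at hc
      exact hxy (hnondeg _ (hpm_mem _) hc)
    obtain ⟨z, hz, hωz⟩ := hex
    have e1 : 2 * a + b - 1 = 0 := by
      have := key1 x hx y hy z hz
      rcases mul_eq_zero.mp this with hh | hh
      · exact hh
      · exact absurd hh hωz
    have e2 : a - b = 0 := by
      have := key2 z hz x hx y hy
      rcases mul_eq_zero.mp this with hh | hh
      · exact hh
      · exact absurd hh hωz
    constructor <;> linarith
  · rintro ⟨ha, hb⟩
    subst ha hb
    constructor
    · intro x hx y hy
      have hmem : L x y - L y x - pm ⁅x, y⁆ ∈ m :=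
        Submodule.sub_mem m (Submodule.sub_mem m (hLmem x hx y hy) (hLmem y hy x hx))
          (hpm_mem _)
      have hd : L x y - L y x - pm ⁅x, y⁆ = 0 := by
        apply hnondeg _ hmem
        intro z hz
        rw [map_sub, map_sub, LinearMap.sub_apply, LinearMap.sub_apply,
          hLdef x hx y hy z hz, hLdef y hy x hx z hz]
        have hI := hid x hx y hy z hz
        have hA := hanti x y z
        linear_combination (1/3 : ℝ) * hI - (1/3 : ℝ) * hA
      exact sub_eq_zero.mp hd
    · intro x hx y hy z hz
      rw [hskew y hy (L x z) (hLmem x hx z hz), hLdef x hx y hy z hz,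
        hLdef x hx z hz y hy]
      ring
end

section
/- Let g = h ⊕ m with [h,m] ⊆ m, and let ω be a nondegenerate skew 2-cocycle on m. Define L^{0,1} by ω(L^{0,1}_x(y), z) = ω([x,z]_m, y), and D_{x,y}(z) = [[x,z]_h, y]. Then the curvature K^{0,1}(x,y) := [L^{0,1}_x, L^{0,1}_y] − L^{0,1}_{[x,y]_m} − ad_{[x,y]_h} (as an endomorphism of m) satisfies ω(K^{0,1}(x,y)z, z') = ω(z, D_{x,y}(z') − D_{y,x}(z')) for all x,y,z,z' ∈ m; i.e., K^{0,1}(x,y) = D_{x,y}^⋇ − D_{y,x}^⋇, where F^⋇ denotes the ω-adjoint of F. -/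
/-- the curvature of the Zero-One connection satisfies
ω(K^{0,1}(x,y)z, z') = ω(z, D_{x,y}(z') - D_{y,x}(z')). -/
theorem stmt7 {g : Type*} [LieRing g] [LieAlgebra ℝ g]
    (h m : Submodule ℝ g) (hcompl : IsCompl h m)
    (hbr : ∀ u ∈ h, ∀ x ∈ m, ⁅u, x⁆ ∈ m)
    (pm ph : g →ₗ[ℝ] g)
    (hpm_mem : ∀ x, pm x ∈ m) (hph_mem : ∀ x, ph x ∈ h)
    (hpm_m : ∀ x ∈ m, pm x = x) (hpm_h : ∀ x ∈ h, pm x = 0)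
    (hph_h : ∀ x ∈ h, ph x = x) (hph_m : ∀ x ∈ m, ph x = 0)
    (hsum : ∀ x, pm x + ph x = x)
    (ω : g →ₗ[ℝ] g →ₗ[ℝ] ℝ)
    (hskew : ∀ x ∈ m, ∀ y ∈ m, ω x y = - ω y x)
    (hnondeg : ∀ x ∈ m, (∀ y ∈ m, ω x y = 0) → x = 0)
    (hcocycle : ∀ x ∈ m, ∀ y ∈ m, ∀ z ∈ m,
      ω (pm ⁅x, y⁆) z + ω (pm ⁅z, x⁆) y + ω (pm ⁅y, z⁆) x = 0)
    (hinv : ∀ u ∈ h, ∀ x ∈ m, ∀ y ∈ m, ω ⁅u, x⁆ y + ω x ⁅u, y⁆ = 0)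
    (L01 : g → g → g)
    (hLmem : ∀ x ∈ m, ∀ y ∈ m, L01 x y ∈ m)
    (hLdef : ∀ x ∈ m, ∀ y ∈ m, ∀ z ∈ m, ω (L01 x y) z = ω (pm ⁅x, z⁆) y) :
    ∀ x ∈ m, ∀ y ∈ m, ∀ z ∈ m, ∀ z' ∈ m,
      ω (L01 x (L01 y z) - L01 y (L01 x z) - L01 (pm ⁅x, y⁆) z - ⁅ph ⁅x, y⁆, z⁆) z' =
        ω z (⁅ph ⁅x, z'⁆, y⁆ - ⁅ph ⁅y, z'⁆, x⁆) := by
  intro x hx y hy z hz z' hz'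
  -- auxiliary: pm ⁅w, anything⁆ decomposition for w ∈ m
  have hpm_decomp : ∀ w ∈ m, ∀ v : g, pm ⁅w, pm v⁆ = pm ⁅w, v⁆ + ⁅ph v, w⁆ := by
    intro w hw v
    have hmem : ⁅ph v, w⁆ ∈ m := hbr _ (hph_mem v) w hw
    have h1 : ⁅w, v⁆ = ⁅w, pm v⁆ + ⁅w, ph v⁆ := by rw [← lie_add, hsum]
    have h2 : ⁅w, ph v⁆ = -⁅ph v, w⁆ := (lie_skew _ _).symm
    have : pm ⁅w, v⁆ = pm ⁅w, pm v⁆ + pm ⁅w, ph v⁆ := by rw [h1, map_add]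
    rw [this, h2, map_neg, hpm_m _ hmem]
    abel
  -- similarly pm ⁅pm v, w⁆ for w ∈ m
  have hpm_decomp' : pm ⁅pm ⁅x, y⁆, z'⁆ = pm ⁅⁅x, y⁆, z'⁆ - ⁅ph ⁅x, y⁆, z'⁆ := by
    have hmem : ⁅ph ⁅x, y⁆, z'⁆ ∈ m := hbr _ (hph_mem _) z' hz'
    have h1 : ⁅(⁅x, y⁆ : g), z'⁆ = ⁅pm ⁅x, y⁆, z'⁆ + ⁅ph ⁅x, y⁆, z'⁆ := by
      rw [← add_lie, hsum]
    have : pm ⁅(⁅x, y⁆ : g), z'⁆ = pm ⁅pm ⁅x, y⁆, z'⁆ + ⁅ph ⁅x, y⁆, z'⁆ := by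
      rw [h1, map_add, hpm_m _ hmem]
    rw [this]; abel
  -- the key vector identity (from the Jacobi identity)
  have key : pm ⁅x, pm ⁅y, z'⁆⁆ - pm ⁅y, pm ⁅x, z'⁆⁆ - pm ⁅pm ⁅x, y⁆, z'⁆
      - ⁅ph ⁅x, y⁆, z'⁆ = ⁅ph ⁅y, z'⁆, x⁆ - ⁅ph ⁅x, z'⁆, y⁆ := by
    rw [hpm_decomp x hx ⁅y, z'⁆, hpm_decomp y hy ⁅x, z'⁆, hpm_decomp']
    have jac : pm ⁅x, ⁅y, z'⁆⁆ - pm ⁅y, ⁅x, z'⁆⁆ - pm ⁅⁅x, y⁆, z'⁆ = 0 := by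
      rw [← map_sub, ← map_sub, lie_lie]
      simp
    have : pm ⁅x, ⁅y, z'⁆⁆ + ⁅ph ⁅y, z'⁆, x⁆ - (pm ⁅y, ⁅x, z'⁆⁆ + ⁅ph ⁅x, z'⁆, y⁆)
        - (pm ⁅⁅x, y⁆, z'⁆ - ⁅ph ⁅x, y⁆, z'⁆) - ⁅ph ⁅x, y⁆, z'⁆
        = (pm ⁅x, ⁅y, z'⁆⁆ - pm ⁅y, ⁅x, z'⁆⁆ - pm ⁅⁅x, y⁆, z'⁆)
          + (⁅ph ⁅y, z'⁆, x⁆ - ⁅ph ⁅x, z'⁆, y⁆) := by abel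
    rw [this, jac, zero_add]
  -- compute each ω-term
  have T1 : ω (L01 x (L01 y z)) z' = - ω (pm ⁅y, pm ⁅x, z'⁆⁆) z := by
    rw [hLdef x hx (L01 y z) (hLmem y hy z hz) z' hz',
      hskew _ (hpm_mem _) _ (hLmem y hy z hz),
      hLdef y hy z hz (pm ⁅x, z'⁆) (hpm_mem _)]
  have T2 : ω (L01 y (L01 x z)) z' = - ω (pm ⁅x, pm ⁅y, z'⁆⁆) z := by
    rw [hLdef y hy (L01 x z) (hLmem x hx z hz) z' hz',
      hskew _ (hpm_mem _) _ (hLmem x hx z hz),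
      hLdef x hx z hz (pm ⁅y, z'⁆) (hpm_mem _)]
  have T3 : ω (L01 (pm ⁅x, y⁆) z) z' = ω (pm ⁅pm ⁅x, y⁆, z'⁆) z :=
    hLdef _ (hpm_mem _) z hz z' hz'
  have T4 : ω ⁅ph ⁅x, y⁆, z⁆ z' = ω ⁅ph ⁅x, y⁆, z'⁆ z := by
    have h1 := hinv _ (hph_mem ⁅x, y⁆) z hz z' hz'
    have h2 : ω z ⁅ph ⁅x, y⁆, z'⁆ = - ω ⁅ph ⁅x, y⁆, z'⁆ z :=
      hskew z hz _ (hbr _ (hph_mem _) z' hz')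
    linarith
  have expand : ω (L01 x (L01 y z) - L01 y (L01 x z) - L01 (pm ⁅x, y⁆) z
      - ⁅ph ⁅x, y⁆, z⁆) z'
      = ω (L01 x (L01 y z)) z' - ω (L01 y (L01 x z)) z'
        - ω (L01 (pm ⁅x, y⁆) z) z' - ω ⁅ph ⁅x, y⁆, z⁆ z' := by
    simp [map_sub]
  rw [expand, T1, T2, T3, T4]
  have lin : - ω (pm ⁅y, pm ⁅x, z'⁆⁆) z - - ω (pm ⁅x, pm ⁅y, z'⁆⁆) z
      - ω (pm ⁅pm ⁅x, y⁆, z'⁆) z - ω ⁅ph ⁅x, y⁆, z'⁆ z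
      = ω (pm ⁅x, pm ⁅y, z'⁆⁆ - pm ⁅y, pm ⁅x, z'⁆⁆ - pm ⁅pm ⁅x, y⁆, z'⁆
          - ⁅ph ⁅x, y⁆, z'⁆) z := by
    simp [map_sub]; ring
  rw [lin, key, map_sub, LinearMap.sub_apply]
  have s1 : ω ⁅ph ⁅y, z'⁆, x⁆ z = - ω z ⁅ph ⁅y, z'⁆, x⁆ :=
    hskew _ (hbr _ (hph_mem _) x hx) z hz
  have s2 : ω ⁅ph ⁅x, z'⁆, y⁆ z = - ω z ⁅ph ⁅x, z'⁆, y⁆ :=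
    hskew _ (hbr _ (hph_mem _) y hy) z hz
  rw [s1, s2, map_sub]
  ring
end

section
/- Under the setup of the previous statement, the curvature K^{0,1}(x,y) vanishes for all x, y ∈ m if and only if [[m,m]_h, m] = {0}, i.e., D_{x,y} = 0 for all x, y ∈ m. In particular, if K^{0,1} = 0 then (m, [·,·]_m) is a Lie algebra (the bracket [x,y]_m satisfies the Jacobi identity). -/
/-- the Zero-One connection is flat iff [[m,m]_h, m] = 0; and if it is
flat then the projected bracket on m satisfies the Jacobi identity. -/
theorem stmt8 {g : Type*} [LieRing g] [LieAlgebra ℝ g]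
    (h m : Submodule ℝ g) (hcompl : IsCompl h m)
    (hbr : ∀ u ∈ h, ∀ x ∈ m, ⁅u, x⁆ ∈ m)
    (pm ph : g →ₗ[ℝ] g)
    (hpm_mem : ∀ x, pm x ∈ m) (hph_mem : ∀ x, ph x ∈ h)
    (hpm_m : ∀ x ∈ m, pm x = x) (hpm_h : ∀ x ∈ h, pm x = 0)
    (hph_h : ∀ x ∈ h, ph x = x) (hph_m : ∀ x ∈ m, ph x = 0)
    (hsum : ∀ x, pm x + ph x = x)
    (ω : g →ₗ[ℝ] g →ₗ[ℝ] ℝ)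
    (hskew : ∀ x ∈ m, ∀ y ∈ m, ω x y = - ω y x)
    (hnondeg : ∀ x ∈ m, (∀ y ∈ m, ω x y = 0) → x = 0)
    (hcocycle : ∀ x ∈ m, ∀ y ∈ m, ∀ z ∈ m,
      ω (pm ⁅x, y⁆) z + ω (pm ⁅z, x⁆) y + ω (pm ⁅y, z⁆) x = 0)
    (hinv : ∀ u ∈ h, ∀ x ∈ m, ∀ y ∈ m, ω ⁅u, x⁆ y + ω x ⁅u, y⁆ = 0)
    (L01 : g → g → g)
    (hLmem : ∀ x ∈ m, ∀ y ∈ m, L01 x y ∈ m)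
    (hLdef : ∀ x ∈ m, ∀ y ∈ m, ∀ z ∈ m, ω (L01 x y) z = ω (pm ⁅x, z⁆) y) :
    ((∀ x ∈ m, ∀ y ∈ m, ∀ z ∈ m,
        L01 x (L01 y z) - L01 y (L01 x z) - L01 (pm ⁅x, y⁆) z - ⁅ph ⁅x, y⁆, z⁆ = 0) ↔
      (∀ x ∈ m, ∀ y ∈ m, ∀ z ∈ m, ⁅ph ⁅x, z⁆, y⁆ = 0)) ∧
    ((∀ x ∈ m, ∀ y ∈ m, ∀ z ∈ m,
        L01 x (L01 y z) - L01 y (L01 x z) - L01 (pm ⁅x, y⁆) z - ⁅ph ⁅x, y⁆, z⁆ = 0) →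
      ∀ x ∈ m, ∀ y ∈ m, ∀ z ∈ m,
        pm ⁅pm ⁅x, y⁆, z⁆ + pm ⁅pm ⁅y, z⁆, x⁆ + pm ⁅pm ⁅z, x⁆, y⁆ = 0) := by
  -- the full Jacobi identity of g, projected to m and decomposed
  have jac : ∀ x ∈ m, ∀ y ∈ m, ∀ w ∈ m,
      pm ⁅pm ⁅x, y⁆, w⁆ + ⁅ph ⁅x, y⁆, w⁆ + pm ⁅pm ⁅y, w⁆, x⁆ + ⁅ph ⁅y, w⁆, x⁆
        + pm ⁅pm ⁅w, x⁆, y⁆ + ⁅ph ⁅w, x⁆, y⁆ = 0 := by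
    intro x hx y hy w hw
    have e1 : ∀ a b : g, ∀ c ∈ m,
        pm ⁅⁅a, b⁆, c⁆ = pm ⁅pm ⁅a, b⁆, c⁆ + ⁅ph ⁅a, b⁆, c⁆ := by
      intro a b c hc
      have hd : ⁅⁅a, b⁆, c⁆ = ⁅pm ⁅a, b⁆, c⁆ + ⁅ph ⁅a, b⁆, c⁆ := by
        conv_lhs => rw [← hsum ⁅a, b⁆]
        rw [add_lie]
      rw [hd, map_add, hpm_m _ (hbr _ (hph_mem _) _ hc)]
    have hJ : ⁅⁅x, y⁆, w⁆ + ⁅⁅y, w⁆, x⁆ + ⁅⁅w, x⁆, y⁆ = (0 : g) := by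
      have hjz := lie_jacobi x y w
      rw [← lie_skew ⁅x, y⁆ w, ← lie_skew ⁅y, w⁆ x, ← lie_skew ⁅w, x⁆ y]
      calc -⁅w, ⁅x, y⁆⁆ + -⁅x, ⁅y, w⁆⁆ + -⁅y, ⁅w, x⁆⁆
          = -(⁅x, ⁅y, w⁆⁆ + ⁅y, ⁅w, x⁆⁆ + ⁅w, ⁅x, y⁆⁆) := by abel
        _ = 0 := by rw [hjz, neg_zero]
    have := congrArg pm hJ
    rw [map_add, map_add, map_zero, e1 x y w hw, e1 y w x hx, e1 w x y hy] at this
    calc pm ⁅pm ⁅x, y⁆, w⁆ + ⁅ph ⁅x, y⁆, w⁆ + pm ⁅pm ⁅y, w⁆, x⁆ + ⁅ph ⁅y, w⁆, x⁆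
          + pm ⁅pm ⁅w, x⁆, y⁆ + ⁅ph ⁅w, x⁆, y⁆
        = pm ⁅pm ⁅x, y⁆, w⁆ + ⁅ph ⁅x, y⁆, w⁆ + (pm ⁅pm ⁅y, w⁆, x⁆ + ⁅ph ⁅y, w⁆, x⁆)
          + (pm ⁅pm ⁅w, x⁆, y⁆ + ⁅ph ⁅w, x⁆, y⁆) := by abel
      _ = 0 := this
  -- the key curvature identity
  have key : ∀ x ∈ m, ∀ y ∈ m, ∀ z ∈ m, ∀ w ∈ m,
      ω (L01 x (L01 y z) - L01 y (L01 x z) - L01 (pm ⁅x, y⁆) z - ⁅ph ⁅x, y⁆, z⁆) w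
        = ω (⁅ph ⁅y, w⁆, x⁆ + ⁅ph ⁅w, x⁆, y⁆) z := by
    intro x hx y hy z hz w hw
    have hLyz : L01 y z ∈ m := hLmem _ hy _ hz
    have hLxz : L01 x z ∈ m := hLmem _ hx _ hz
    have hpxw : pm ⁅x, w⁆ ∈ m := hpm_mem _
    have hpyw : pm ⁅y, w⁆ ∈ m := hpm_mem _
    have t1 : ω (L01 x (L01 y z)) w = - ω (pm ⁅y, pm ⁅x, w⁆⁆) z := by
      rw [hLdef _ hx _ hLyz _ hw, hskew _ hpxw _ hLyz, hLdef _ hy _ hz _ hpxw]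
    have t2 : ω (L01 y (L01 x z)) w = - ω (pm ⁅x, pm ⁅y, w⁆⁆) z := by
      rw [hLdef _ hy _ hLxz _ hw, hskew _ hpyw _ hLxz, hLdef _ hx _ hz _ hpyw]
    have t3 : ω (L01 (pm ⁅x, y⁆) z) w = ω (pm ⁅pm ⁅x, y⁆, w⁆) z :=
      hLdef _ (hpm_mem _) _ hz _ hw
    have t4 : ω ⁅ph ⁅x, y⁆, z⁆ w = ω ⁅ph ⁅x, y⁆, w⁆ z := by
      have h1 := hinv (ph ⁅x, y⁆) (hph_mem _) z hz w hw
      have h2 := hskew z hz ⁅ph ⁅x, y⁆, w⁆ (hbr _ (hph_mem _) _ hw)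
      have : ω ⁅ph ⁅x, y⁆, z⁆ w = - ω z ⁅ph ⁅x, y⁆, w⁆ := by linarith
      rw [this, h2, neg_neg]
    have expand : ω (L01 x (L01 y z) - L01 y (L01 x z) - L01 (pm ⁅x, y⁆) z
        - ⁅ph ⁅x, y⁆, z⁆) w
        = ω (L01 x (L01 y z)) w - ω (L01 y (L01 x z)) w - ω (L01 (pm ⁅x, y⁆) z) w
          - ω ⁅ph ⁅x, y⁆, z⁆ w := by
      simp [map_sub]
    rw [expand, t1, t2, t3, t4]
    have hAB : - pm ⁅y, pm ⁅x, w⁆⁆ - - pm ⁅x, pm ⁅y, w⁆⁆ - pm ⁅pm ⁅x, y⁆, w⁆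
        - ⁅ph ⁅x, y⁆, w⁆ = ⁅ph ⁅y, w⁆, x⁆ + ⁅ph ⁅w, x⁆, y⁆ := by
      have s1 : pm ⁅x, pm ⁅y, w⁆⁆ = - pm ⁅pm ⁅y, w⁆, x⁆ := by
        rw [← lie_skew x (pm ⁅y, w⁆), map_neg]
      have s2 : pm ⁅y, pm ⁅x, w⁆⁆ = pm ⁅pm ⁅w, x⁆, y⁆ := by
        rw [← lie_skew x w, map_neg, lie_neg, map_neg,
          ← lie_skew y (pm ⁅w, x⁆), map_neg, neg_neg]
      rw [s1, s2, neg_neg]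
      have hj := jac x hx y hy w hw
      have : pm ⁅pm ⁅x, y⁆, w⁆ + ⁅ph ⁅x, y⁆, w⁆
          = - (pm ⁅pm ⁅y, w⁆, x⁆ + ⁅ph ⁅y, w⁆, x⁆ + pm ⁅pm ⁅w, x⁆, y⁆
            + ⁅ph ⁅w, x⁆, y⁆) := by
        rw [eq_neg_iff_add_eq_zero, ← hj]; abel
      have h2 : pm ⁅pm ⁅x, y⁆, w⁆
          = - (pm ⁅pm ⁅y, w⁆, x⁆ + ⁅ph ⁅y, w⁆, x⁆ + pm ⁅pm ⁅w, x⁆, y⁆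
            + ⁅ph ⁅w, x⁆, y⁆) - ⁅ph ⁅x, y⁆, w⁆ := by
        rw [← this]; abel
      rw [h2]; abel
    calc - ω (pm ⁅y, pm ⁅x, w⁆⁆) z - - ω (pm ⁅x, pm ⁅y, w⁆⁆) z
          - ω (pm ⁅pm ⁅x, y⁆, w⁆) z - ω ⁅ph ⁅x, y⁆, w⁆ z
        = ω (- pm ⁅y, pm ⁅x, w⁆⁆ - - pm ⁅x, pm ⁅y, w⁆⁆ - pm ⁅pm ⁅x, y⁆, w⁆
            - ⁅ph ⁅x, y⁆, w⁆) z := by simp [map_sub, map_neg]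
      _ = ω (⁅ph ⁅y, w⁆, x⁆ + ⁅ph ⁅w, x⁆, y⁆) z := by rw [hAB]
  -- forward direction: flat ⇒ [[m,m]_h, m] = 0
  have hforward : (∀ x ∈ m, ∀ y ∈ m, ∀ z ∈ m,
      L01 x (L01 y z) - L01 y (L01 x z) - L01 (pm ⁅x, y⁆) z - ⁅ph ⁅x, y⁆, z⁆ = 0) →
      ∀ x ∈ m, ∀ y ∈ m, ∀ z ∈ m, ⁅ph ⁅x, z⁆, y⁆ = 0 := by
    intro hflat
    have R : ∀ x ∈ m, ∀ y ∈ m, ∀ w ∈ m,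
        ⁅ph ⁅y, w⁆, x⁆ + ⁅ph ⁅w, x⁆, y⁆ = 0 := by
      intro x hx y hy w hw
      apply hnondeg _ (m.add_mem (hbr _ (hph_mem _) _ hx) (hbr _ (hph_mem _) _ hy))
      intro z hz
      have hk := key x hx y hy z hz w hw
      rw [hflat x hx y hy z hz] at hk
      simpa using hk.symm
    intro x hx y hy z hz
    have h1 := R y hy x hx z hz
    have h2 := R x hx z hz y hy
    have h3 := R z hz y hy x hx
    have ha : ⁅ph ⁅x, z⁆, y⁆ = - ⁅ph ⁅z, y⁆, x⁆ := eq_neg_of_add_eq_zero_left h1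
    have hb : ⁅ph ⁅z, y⁆, x⁆ = - ⁅ph ⁅y, x⁆, z⁆ := eq_neg_of_add_eq_zero_left h2
    have hc : ⁅ph ⁅y, x⁆, z⁆ = - ⁅ph ⁅x, z⁆, y⁆ := eq_neg_of_add_eq_zero_left h3
    have hself : ⁅ph ⁅x, z⁆, y⁆ = - ⁅ph ⁅x, z⁆, y⁆ := by
      calc ⁅ph ⁅x, z⁆, y⁆ = - ⁅ph ⁅z, y⁆, x⁆ := ha
        _ = - - ⁅ph ⁅y, x⁆, z⁆ := by rw [hb]
        _ = ⁅ph ⁅y, x⁆, z⁆ := neg_neg _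
        _ = - ⁅ph ⁅x, z⁆, y⁆ := hc
    have h2s : (2 : ℝ) • ⁅ph ⁅x, z⁆, y⁆ = 0 := by
      rw [two_smul]
      nth_rewrite 2 [hself]
      exact add_neg_cancel _
    rcases smul_eq_zero.mp h2s with hbad | hgood
    · norm_num at hbad
    · exact hgood
  constructor
  · constructor
    · exact hforward
    · -- backward direction
      intro hT x hx y hy z hz
      have hKmem : L01 x (L01 y z) - L01 y (L01 x z) - L01 (pm ⁅x, y⁆) z
          - ⁅ph ⁅x, y⁆, z⁆ ∈ m := by
        refine m.sub_mem (m.sub_mem (m.sub_mem ?_ ?_) ?_) ?_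
        · exact hLmem _ hx _ (hLmem _ hy _ hz)
        · exact hLmem _ hy _ (hLmem _ hx _ hz)
        · exact hLmem _ (hpm_mem _) _ hz
        · exact hbr _ (hph_mem _) _ hz
      apply hnondeg _ hKmem
      intro w hw
      rw [key x hx y hy z hz w hw, hT y hy x hx w hw, hT w hw y hy x hx]
      simp
  · -- flatness implies the Jacobi identity of the projected bracket
    intro hflat x hx y hy z hz
    have hT := hforward hflat
    have hj := jac x hx y hy z hz
    rw [hT x hx z hz y hy, hT y hy x hx z hz, hT z hz y hy x hx] at hj
    calc pm ⁅pm ⁅x, y⁆, z⁆ + pm ⁅pm ⁅y, z⁆, x⁆ + pm ⁅pm ⁅z, x⁆, y⁆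
        = pm ⁅pm ⁅x, y⁆, z⁆ + 0 + pm ⁅pm ⁅y, z⁆, x⁆ + 0 + pm ⁅pm ⁅z, x⁆, y⁆ + 0 := by
          abel
      _ = 0 := hj
end

section
/- Let (g, ω) be a symplectic Lie algebra with canonical left-symmetric product L^{0,1} defined by ω(L^{0,1}_x(y), z) = −ω(y, [x,z]), and set R^{0,1}_x(y) := L^{0,1}_y(x). Then for all x, y ∈ g: (i) ω(R^{0,1}_x(y), z) = ω(y, R^{0,1}_x(z)); (ii) tr(L^{0,1}_x ∘ L^{0,1}_y) = tr(ad_x ∘ ad_y); (iii) tr(R^{0,1}_x ∘ R^{0,1}_y) = 2·tr(ad_x ∘ ad_y) + 2·tr(ad_x ∘ (ad_y)^⋇), where F^⋇ is the ω-adjoint. -/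
/-- properties of L^{0,1} and R^{0,1} on a symplectic Lie algebra:
(i) ω(R_x y, z) = ω(y, R_x z); (ii) tr(L_x ∘ L_y) = tr(ad_x ∘ ad_y);
(iii) tr(R_x ∘ R_y) = 2 tr(ad_x ∘ ad_y) + 2 tr(ad_x ∘ (ad_y)^*). -/
theorem stmt12 {g : Type*} [LieRing g] [LieAlgebra ℝ g] [Module.Finite ℝ g]
    (ω : g →ₗ[ℝ] g →ₗ[ℝ] ℝ)
    (hskew : ∀ x y : g, ω x y = - ω y x)
    (hnondeg : ∀ x : g, (∀ y : g, ω x y = 0) → x = 0)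
    (hcocycle : ∀ x y z : g, ω ⁅x, y⁆ z + ω ⁅z, x⁆ y + ω ⁅y, z⁆ x = 0)
    (L01 : g →ₗ[ℝ] g →ₗ[ℝ] g)
    (hLdef : ∀ x y z : g, ω (L01 x y) z = - ω y ⁅x, z⁆)
    (A : g → (g →ₗ[ℝ] g))
    (hA : ∀ y u v : g, ω ((A y) u) v = ω u ⁅y, v⁆) :
    (∀ x y z : g, ω (L01 y x) z = ω y (L01 z x)) ∧
    (∀ x y : g, LinearMap.trace ℝ g ((L01 x) ∘ₗ (L01 y)) =
      LinearMap.trace ℝ g ((LieAlgebra.ad ℝ g x) ∘ₗ (LieAlgebra.ad ℝ g y))) ∧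
    (∀ x y : g, LinearMap.trace ℝ g ((L01.flip x) ∘ₗ (L01.flip y)) =
      2 * LinearMap.trace ℝ g ((LieAlgebra.ad ℝ g x) ∘ₗ (LieAlgebra.ad ℝ g y)) +
      2 * LinearMap.trace ℝ g ((LieAlgebra.ad ℝ g x) ∘ₗ (A y))) := by
  have hfd : FiniteDimensional ℝ g := inferInstance
  have hnd : LinearMap.BilinForm.Nondegenerate ω :=
    ⟨hnondeg, fun y hy => hnondeg y (fun x => by rw [hskew, hy x, neg_zero])⟩
  set e := LinearMap.BilinForm.toDual ω hnd with he
  -- separation lemma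
  have sep : ∀ u v : g, (∀ z : g, ω u z = ω v z) → u = v := by
    intro u v h
    have h0 : u - v = 0 :=
      hnondeg (u - v) (fun z => by rw [map_sub, LinearMap.sub_apply, h z, sub_self])
    exact sub_eq_zero.mp h0
  -- key trace lemma via dual transport
  have key : ∀ F G : g →ₗ[ℝ] g, (∀ u v : g, ω (F u) v = ω u (G v)) →
      LinearMap.trace ℝ g F = LinearMap.trace ℝ g G := by
    intro F G h
    have hF : e.symm.conj (Module.Dual.transpose (R := ℝ) G) = F := by
      ext u
      have heq : (Module.Dual.transpose (R := ℝ) G) (e u) = e (F u) := by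
        ext v
        have : (e u) (G v) = (e (F u)) v := (h u v).symm
        simpa [Module.Dual.transpose_apply] using this
      simp [LinearEquiv.conj_apply, heq]
    calc LinearMap.trace ℝ g F
        = LinearMap.trace ℝ g (e.symm.conj (Module.Dual.transpose (R := ℝ) G)) := by rw [hF]
      _ = LinearMap.trace ℝ _ (Module.Dual.transpose (R := ℝ) G) := LinearMap.trace_conj' _ _
      _ = LinearMap.trace ℝ g G := LinearMap.trace_transpose' G
  -- L01 x = - A x
  have hLA : ∀ x : g, L01 x = - A x := by
    intro x
    ext y
    apply sep
    intro z
    rw [hLdef]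
    simp [hA]
  -- flip formula : L01.flip x = -(ad x + A x)
  have hR : ∀ x : g, L01.flip x = -(LieAlgebra.ad ℝ g x + A x) := by
    intro x
    ext y
    apply sep
    intro z
    have lhs : (L01.flip x) y = L01 y x := rfl
    rw [lhs, hLdef y x z]
    have rhs : ω ((-(LieAlgebra.ad ℝ g x + A x)) y) z = -(ω ⁅x, y⁆ z) - ω y ⁅x, z⁆ := by
      simp only [LinearMap.neg_apply, LinearMap.add_apply, LieAlgebra.ad_apply, map_neg,
        map_add, LinearMap.neg_apply, LinearMap.add_apply, hA]
      ring
    rw [rhs]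
    have hneg : (⁅z, x⁆ : g) = -⁅x, z⁆ := by rw [← lie_skew]
    have h2 : ω x ⁅y, z⁆ = - ω ⁅y, z⁆ x := hskew _ _
    have h3 : ω ⁅z, x⁆ y = ω y ⁅x, z⁆ := by
      rw [hneg, map_neg, LinearMap.neg_apply, hskew ⁅x, z⁆ y, neg_neg]
    have hc := hcocycle x y z
    linarith
  -- adjoint of ad y is A y
  have adj_ad : ∀ y u v : g, ω (⁅y, u⁆) v = ω u ((A y) v) := by
    intro y u v
    have h1 := hA y v u
    rw [hskew ⁅y, u⁆ v, ← h1, hskew ((A y) v) u, neg_neg]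
  refine ⟨?_, ?_, ?_⟩
  · intro x y z
    rw [hLdef y x z, hskew y (L01 z x), hLdef z x y, neg_neg]
    have hneg : (⁅z, y⁆ : g) = -⁅y, z⁆ := by rw [← lie_skew]
    rw [hneg, map_neg]
  · intro x y
    rw [hLA x, hLA y]
    have h1 : ((-A x) ∘ₗ (-A y)) = (A x) ∘ₗ (A y) := by ext v; simp
    rw [h1]
    have h2 : LinearMap.trace ℝ g ((A x) ∘ₗ (A y)) =
        LinearMap.trace ℝ g ((LieAlgebra.ad ℝ g y) ∘ₗ (LieAlgebra.ad ℝ g x)) := by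
      apply key
      intro u v
      simp only [LinearMap.comp_apply, LieAlgebra.ad_apply]
      rw [hA, hA]
    rw [h2, LinearMap.trace_comp_comm']
  · intro x y
    rw [hR x, hR y]
    have expand : (-(LieAlgebra.ad ℝ g x + A x)) ∘ₗ (-(LieAlgebra.ad ℝ g y + A y)) =
        (LieAlgebra.ad ℝ g x) ∘ₗ (LieAlgebra.ad ℝ g y) + (LieAlgebra.ad ℝ g x) ∘ₗ (A y) +
        ((A x) ∘ₗ (LieAlgebra.ad ℝ g y) + (A x) ∘ₗ (A y)) := by
      rw [LinearMap.neg_comp, LinearMap.comp_neg, neg_neg, LinearMap.add_comp,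
        LinearMap.comp_add, LinearMap.comp_add]
    rw [expand, map_add, map_add, map_add]
    have hAA : LinearMap.trace ℝ g ((A x) ∘ₗ (A y)) =
        LinearMap.trace ℝ g ((LieAlgebra.ad ℝ g x) ∘ₗ (LieAlgebra.ad ℝ g y)) := by
      have h2 : LinearMap.trace ℝ g ((A x) ∘ₗ (A y)) =
          LinearMap.trace ℝ g ((LieAlgebra.ad ℝ g y) ∘ₗ (LieAlgebra.ad ℝ g x)) := by
        apply key
        intro u v
        simp only [LinearMap.comp_apply, LieAlgebra.ad_apply]
        rw [hA, hA]
      rw [h2, LinearMap.trace_comp_comm']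
    have hAad : LinearMap.trace ℝ g ((A x) ∘ₗ (LieAlgebra.ad ℝ g y)) =
        LinearMap.trace ℝ g ((LieAlgebra.ad ℝ g x) ∘ₗ (A y)) := by
      have h2 : LinearMap.trace ℝ g ((A x) ∘ₗ (LieAlgebra.ad ℝ g y)) =
          LinearMap.trace ℝ g ((A y) ∘ₗ (LieAlgebra.ad ℝ g x)) := by
        apply key
        intro u v
        simp only [LinearMap.comp_apply, LieAlgebra.ad_apply]
        rw [hA, adj_ad]
      rw [h2, LinearMap.trace_comp_comm']
    rw [hAA, hAad]
    ring
end

section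
/- Let (g, ω) be a symplectic Lie algebra and define L^s_x(y) = (1/3)(L^{0,1}_x(y) + [x,y]), where L^{0,1} is the canonical left-symmetric product defined by ω(L^{0,1}_x(y), z) = −ω(y, [x,z]). Then L^s is torsion-free and symplectic: L^s_x y − L^s_y x = [x,y], and ω(L^s_x(y), z) + ω(y, L^s_x(z)) = 0 for all x, y, z ∈ g. -/
/-- L^s = (1/3)(L^{0,1} + ad) is torsion-free and symplectic. -/
theorem stmt13 {g : Type*} [LieRing g] [LieAlgebra ℝ g] [Module.Finite ℝ g]
    (ω : g →ₗ[ℝ] g →ₗ[ℝ] ℝ)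
    (hskew : ∀ x y : g, ω x y = - ω y x)
    (hnondeg : ∀ x : g, (∀ y : g, ω x y = 0) → x = 0)
    (hcocycle : ∀ x y z : g, ω ⁅x, y⁆ z + ω ⁅z, x⁆ y + ω ⁅y, z⁆ x = 0)
    (L01 : g →ₗ[ℝ] g →ₗ[ℝ] g)
    (hLdef : ∀ x y z : g, ω (L01 x y) z = - ω y ⁅x, z⁆)
    (Ls : g →ₗ[ℝ] g →ₗ[ℝ] g)
    (hLs : ∀ x y : g, Ls x y = (1/3 : ℝ) • (L01 x y + ⁅x, y⁆)) :
    (∀ x y : g, Ls x y - Ls y x = ⁅x, y⁆) ∧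
    (∀ x y z : g, ω (Ls x y) z + ω y (Ls x z) = 0) := by
  -- key bracket identity: ω ⁅x,y⁆ z = -ω y ⁅x,z⁆ + ω x ⁅y,z⁆
  have hbr : ∀ x y z : g, ω ⁅x, y⁆ z = - ω y ⁅x, z⁆ + ω x ⁅y, z⁆ := by
    intro x y z
    have h1 := hcocycle x y z
    have h2 : ω ⁅z, x⁆ y = ω y ⁅x, z⁆ := by
      have hzx : (⁅z, x⁆ : g) = -⁅x, z⁆ := by rw [← lie_skew]
      rw [hzx, map_neg, LinearMap.neg_apply, hskew ⁅x, z⁆ y, neg_neg, hskew y ⁅x, z⁆]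
    have h3 : ω ⁅y, z⁆ x = - ω x ⁅y, z⁆ := hskew _ _
    linarith
  have hL01 : ∀ x y : g, L01 x y - L01 y x = ⁅x, y⁆ := by
    intro x y
    have h : L01 x y - L01 y x - ⁅x, y⁆ = 0 := by
      apply hnondeg
      intro z
      have e1 := hLdef x y z
      have e2 := hLdef y x z
      have e3 := hbr x y z
      simp only [map_sub, LinearMap.sub_apply]
      linarith
    exact sub_eq_zero.mp h
  constructor
  · intro x y
    rw [hLs x y, hLs y x, ← smul_sub]
    have : L01 x y + ⁅x, y⁆ - (L01 y x + ⁅y, x⁆) = (3 : ℝ) • ⁅x, y⁆ := by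
      have hyx : (⁅y, x⁆ : g) = -⁅x, y⁆ := by rw [← lie_skew]
      rw [hyx]
      have := hL01 x y
      rw [show L01 x y + ⁅x, y⁆ - (L01 y x + -⁅x, y⁆) = (L01 x y - L01 y x) + 2 • ⁅x, y⁆ by
        module, this]
      module
    rw [this, smul_smul]
    norm_num
  · intro x y z
    rw [hLs x y, hLs x z]
    have e1 := hLdef x y z
    have e2 := hLdef x z y
    have e3 : ω y ⁅x, z⁆ = - ω ⁅x, z⁆ y := hskew _ _
    have e4 : ω y (L01 x z) = - ω (L01 x z) y := hskew _ _
    have e5 : ω y ⁅x, z⁆ = - ω ⁅x, z⁆ y := hskew _ _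
    simp only [map_smul, LinearMap.smul_apply, map_add, LinearMap.add_apply, smul_eq_mul]
    have e6 : ω ⁅x, y⁆ z = - ω z ⁅x, y⁆ := hskew _ _
    linarith
end

section
/- Let (g, ω) be a symplectic Lie algebra, L^{0,1} the canonical left-symmetric product (ω(L^{0,1}_x(y), z) = −ω(y, [x,z])), R^{0,1}_x(y) = L^{0,1}_y(x), and L^s = (1/3)(L^{0,1} + ad). Then the curvature K^s(x,y) := [L^s_x, L^s_y] − L^s_{[x,y]} equals (1/9){R^{0,1}_{[x,y]} − [R^{0,1}_x, R^{0,1}_y] − 2·L^{0,1}_{[x,y]}} for all x, y ∈ g. -/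
/-- the curvature of the natural symplectic connection of a symplectic
Lie group: K^s(x,y) = (1/9)(R^{0,1}_{[x,y]} - [R^{0,1}_x, R^{0,1}_y] - 2 L^{0,1}_{[x,y]}). -/
theorem stmt14 {g : Type*} [LieRing g] [LieAlgebra ℝ g] [Module.Finite ℝ g]
    (ω : g →ₗ[ℝ] g →ₗ[ℝ] ℝ)
    (hskew : ∀ x y : g, ω x y = - ω y x)
    (hnondeg : ∀ x : g, (∀ y : g, ω x y = 0) → x = 0)
    (hcocycle : ∀ x y z : g, ω ⁅x, y⁆ z + ω ⁅z, x⁆ y + ω ⁅y, z⁆ x = 0)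
    (L01 : g →ₗ[ℝ] g →ₗ[ℝ] g)
    (hLdef : ∀ x y z : g, ω (L01 x y) z = - ω y ⁅x, z⁆)
    (Ls : g →ₗ[ℝ] g →ₗ[ℝ] g)
    (hLs : ∀ x y : g, Ls x y = (1/3 : ℝ) • (L01 x y + ⁅x, y⁆)) :
    ∀ x y z : g,
      Ls x (Ls y z) - Ls y (Ls x z) - Ls ⁅x, y⁆ z =
        (1/9 : ℝ) • (L01 z ⁅x, y⁆ - (L01 (L01 z y) x - L01 (L01 z x) y)
          - (2 : ℝ) • L01 ⁅x, y⁆ z) := by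
  have key : ∀ v w : g, (∀ u : g, ω v u = ω w u) → v = w := by
    intro v w h
    have h0 : v - w = 0 := hnondeg (v - w) (fun u => by
      have := h u
      simp only [map_sub, LinearMap.sub_apply]
      linarith)
    exact sub_eq_zero.mp h0
  have htor : ∀ a b : g, ⁅a, b⁆ = L01 a b - L01 b a := by
    intro a b
    refine (key (L01 a b - L01 b a) ⁅a, b⁆ ?_).symm
    intro u
    simp only [map_sub, LinearMap.sub_apply, hLdef]
    have h1 := hcocycle a b u
    rw [← lie_skew u a] at h1
    simp only [map_neg, LinearMap.neg_apply] at h1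
    have h2 := hskew b ⁅a, u⁆
    have h3 := hskew a ⁅b, u⁆
    linarith
  have hflat : ∀ a b c : g, L01 a (L01 b c) - L01 b (L01 a c) = L01 ⁅a, b⁆ c := by
    intro a b c
    refine key _ _ ?_
    intro u
    simp only [map_sub, LinearMap.sub_apply, hLdef, lie_lie]
    ring
  have hA : ∀ a b c : g, L01 a (L01 b c) - L01 b (L01 a c)
      = L01 (L01 a b) c - L01 (L01 b a) c := by
    intro a b c
    rw [hflat, htor, map_sub, LinearMap.sub_apply]
  intro x y z
  simp only [hLs, htor, map_add, map_sub, map_smul, LinearMap.add_apply,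
    LinearMap.sub_apply, LinearMap.smul_apply, smul_add, smul_sub]
  linear_combination (norm := module) ((4/9 : ℝ)) • hA x y z
    - ((2/9 : ℝ)) • hA x z y + ((2/9 : ℝ)) • hA y z x
end

section
/- Let (g, ω) be a symplectic Lie algebra with u ∈ g the unique vector satisfying ω(u, x) = tr(ad_x) for all x. The Ricci curvature of the natural symplectic connection, ric^s(x,y) := tr(z ↦ K^s(x,z)y) with K^s(x,y) = [L^s_x, L^s_y] − L^s_{[x,y]} and L^s = (1/3)(L^{0,1} + ad), is given by ric^s(x,y) = (1/9){κ(x,y) + ω(x, [u, y])}, where κ is the Killing form of g. -/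
/-- the Ricci curvature of the natural symplectic connection of a
symplectic Lie algebra is ric^s(x,y) = (1/9)(κ(x,y) + ω(x,[u,y])). -/
theorem stmt15 {g : Type*} [LieRing g] [LieAlgebra ℝ g] [Module.Finite ℝ g]
    (ω : g →ₗ[ℝ] g →ₗ[ℝ] ℝ)
    (hskew : ∀ x y : g, ω x y = - ω y x)
    (hnondeg : ∀ x : g, (∀ y : g, ω x y = 0) → x = 0)
    (hcocycle : ∀ x y z : g, ω ⁅x, y⁆ z + ω ⁅z, x⁆ y + ω ⁅y, z⁆ x = 0)
    (L01 : g →ₗ[ℝ] g →ₗ[ℝ] g)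
    (hLdef : ∀ x y z : g, ω (L01 x y) z = - ω y ⁅x, z⁆)
    (Ls : g →ₗ[ℝ] g →ₗ[ℝ] g)
    (hLs : ∀ x y : g, Ls x y = (1/3 : ℝ) • (L01 x y + ⁅x, y⁆))
    (u : g) (hu : ∀ x : g, ω u x = LinearMap.trace ℝ g (LieAlgebra.ad ℝ g x)) :
    ∀ x y : g,
      LinearMap.trace ℝ g
          ((Ls x) ∘ₗ (Ls.flip y) - Ls.flip (Ls x y) - (Ls.flip y) ∘ₗ (LieAlgebra.ad ℝ g x)) =
        (1/9 : ℝ) * (LinearMap.trace ℝ g ((LieAlgebra.ad ℝ g x) ∘ₗ (LieAlgebra.ad ℝ g y))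
          + ω x ⁅u, y⁆) := by
  intro x y
  have hFD : FiniteDimensional ℝ g := ‹Module.Finite ℝ g›
  -- bracket skew as an equation in g
  have hls : ∀ p q : g, (⁅p, q⁆ : g) = -⁅q, p⁆ := by
    intro p q; rw [← lie_skew]
  -- the trace of the ω-adjoint equals the trace
  have hadj : ∀ M N : Module.End ℝ g, (∀ z t : g, ω (M z) t = ω z (N t)) →
      LinearMap.trace ℝ g M = LinearMap.trace ℝ g N := by
    intro M N h
    have hND : LinearMap.BilinForm.Nondegenerate ω :=
      ⟨hnondeg, fun y hy => hnondeg y (fun x => by rw [hskew, hy, neg_zero])⟩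
    set e : g ≃ₗ[ℝ] Module.Dual ℝ g := LinearMap.BilinForm.toDual ω hND with he
    have key : e.conj M = N.dualMap := by
      apply LinearMap.ext
      intro f
      obtain ⟨z, rfl⟩ := e.surjective f
      apply LinearMap.ext
      intro t
      have h1 : e.conj M (e z) = e (M z) := by
        simp [LinearEquiv.conj_apply]
      rw [h1]
      have h2 : (e (M z)) t = ω (M z) t := LinearMap.BilinForm.toDual_def hND
      have h3 : (N.dualMap (e z)) t = (e z) (N t) := rfl
      have h4 : (e z) (N t) = ω z (N t) := LinearMap.BilinForm.toDual_def hND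
      rw [h2, h3, h4]
      exact h z t
    calc LinearMap.trace ℝ g M
        = LinearMap.trace ℝ (Module.Dual ℝ g) (e.conj M) := (LinearMap.trace_conj' M e).symm
      _ = LinearMap.trace ℝ (Module.Dual ℝ g) N.dualMap := by rw [key]
      _ = LinearMap.trace ℝ g N := by
          rw [LinearMap.dualMap_def, LinearMap.trace_transpose']
  -- F1 : L01 p q = L01 q p + ⁅p,q⁆
  have F1 : ∀ p q : g, L01 p q = L01 q p + ⁅p, q⁆ := by
    intro p q
    have h0 : ∀ z : g, ω (L01 p q - (L01 q p + ⁅p, q⁆)) z = 0 := by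
      intro z
      have e1 := hLdef p q z
      have e2 := hLdef q p z
      have e3 := hcocycle p q z
      have e4 := hskew q ⁅p, z⁆
      have e5 : ω ⁅z, p⁆ q = - ω ⁅p, z⁆ q := by
        rw [hls z p, map_neg, LinearMap.neg_apply]
      have e6 := hskew p ⁅q, z⁆
      simp only [map_sub, map_add, LinearMap.sub_apply, LinearMap.add_apply]
      linarith
    have h1 := hnondeg _ h0
    rw [sub_eq_zero] at h1
    exact h1
  -- F2 : L01 is a representation
  have F2 : ∀ p q z : g, L01 ⁅p, q⁆ z = L01 p (L01 q z) - L01 q (L01 p z) := by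
    intro p q z
    have h0 : ∀ w : g, ω (L01 ⁅p, q⁆ z - (L01 p (L01 q z) - L01 q (L01 p z))) w = 0 := by
      intro w
      have e1 := hLdef ⁅p, q⁆ z w
      have e2 := hLdef p (L01 q z) w
      have e3 := hLdef q (L01 p z) w
      have e4 := hLdef q z ⁅p, w⁆
      have e5 := hLdef p z ⁅q, w⁆
      have e7 : ω z ⁅⁅p, q⁆, w⁆ = ω z ⁅p, ⁅q, w⁆⁆ - ω z ⁅q, ⁅p, w⁆⁆ := by
        rw [lie_lie, map_sub]
      simp only [map_sub, LinearMap.sub_apply]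
      linarith
    have h1 := hnondeg _ h0
    rw [sub_eq_zero] at h1
    exact h1
  -- trace of ad of a bracket vanishes
  have tmc : ∀ f h : Module.End ℝ g,
      LinearMap.trace ℝ g (f ∘ₗ h) = LinearMap.trace ℝ g (h ∘ₗ f) := by
    intro f h
    rw [← Module.End.mul_eq_comp, ← Module.End.mul_eq_comp, LinearMap.trace_mul_comm]
  have trad_br : ∀ p q : g, LinearMap.trace ℝ g (LieAlgebra.ad ℝ g ⁅p, q⁆) = 0 := by
    intro p q
    have h1 : LieAlgebra.ad ℝ g ⁅p, q⁆ =
        LieAlgebra.ad ℝ g p * LieAlgebra.ad ℝ g q - LieAlgebra.ad ℝ g q * LieAlgebra.ad ℝ g p := by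
      ext z; simp only [Module.End.mul_apply, LieAlgebra.ad_apply, LinearMap.sub_apply]; exact lie_lie p q z
    rw [h1, map_sub, LinearMap.trace_mul_comm, sub_self]
  -- trace of L01 w
  have trL01 : ∀ w : g, LinearMap.trace ℝ g (L01 w)
      = - LinearMap.trace ℝ g (LieAlgebra.ad ℝ g w) := by
    intro w
    have h1 := hadj (L01 w) (-(LieAlgebra.ad ℝ g w)) (by
      intro z t
      have := hLdef w z t
      simp only [LinearMap.neg_apply, map_neg, LieAlgebra.ad_apply]
      linarith)
    rw [h1, map_neg]
  -- ω ⁅p,z⁆ t = -ω z (L01 p t)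
  have hωad : ∀ p z t : g, ω ⁅p, z⁆ t = - ω z (L01 p t) := by
    intro p z t
    have e1 := hLdef p t z
    have e2 := hskew z (L01 p t)
    have e3 := hskew t ⁅p, z⁆
    linarith
  -- trace (L01 x ∘ L01 y) = trace (ad x ∘ ad y)
  have trAB : LinearMap.trace ℝ g (L01 x ∘ₗ L01 y)
      = LinearMap.trace ℝ g (LieAlgebra.ad ℝ g x ∘ₗ LieAlgebra.ad ℝ g y) := by
    have h1 := hadj (L01 x ∘ₗ L01 y) (LieAlgebra.ad ℝ g y ∘ₗ LieAlgebra.ad ℝ g x) (by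
      intro z t
      simp only [LinearMap.comp_apply, LieAlgebra.ad_apply]
      have e1 := hLdef x (L01 y z) t
      have e2 := hLdef y z ⁅x, t⁆
      linarith)
    rw [h1, tmc]
  -- trace (L01 y ∘ ad x) = trace (L01 x ∘ ad y)
  have trBa : LinearMap.trace ℝ g (L01 y ∘ₗ LieAlgebra.ad ℝ g x)
      = LinearMap.trace ℝ g (L01 x ∘ₗ LieAlgebra.ad ℝ g y) := by
    apply hadj
    intro z t
    simp only [LinearMap.comp_apply, LieAlgebra.ad_apply]
    have e1 := hLdef y ⁅x, z⁆ t
    have e2 := hωad x z ⁅y, t⁆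
    linarith
  -- the endomorphism L01.flip w = L01 w - ad w
  have hflipL : ∀ w : g, L01.flip w = L01 w - LieAlgebra.ad ℝ g w := by
    intro w
    ext z
    simp only [LinearMap.flip_apply, LinearMap.sub_apply, LieAlgebra.ad_apply]
    rw [F1 w z]
    abel
  -- right multiplications identity and the key trace relation Q = K + s
  have hRv : L01.flip (L01 x y) =
      L01.flip y ∘ₗ L01.flip x - L01.flip y ∘ₗ L01 x + L01 x ∘ₗ L01.flip y := by
    ext z
    simp only [LinearMap.comp_apply, LinearMap.flip_apply, LinearMap.sub_apply,
      LinearMap.add_apply]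
    have h2 : L01 ⁅z, x⁆ y = L01 (L01 z x) y - L01 (L01 x z) y := by
      have hzx : (⁅z, x⁆ : g) = L01 z x - L01 x z := by rw [F1 z x]; abel
      rw [hzx, map_sub, LinearMap.sub_apply]
    have h1 := F2 z x y
    have h3 : L01 z (L01 x y) = L01 ⁅z, x⁆ y + L01 x (L01 z y) := by rw [h1]; abel
    rw [h3, h2]
  have hQKs : LinearMap.trace ℝ g (L01 x ∘ₗ LieAlgebra.ad ℝ g y)
      = LinearMap.trace ℝ g (LieAlgebra.ad ℝ g x ∘ₗ LieAlgebra.ad ℝ g y)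
        + LinearMap.trace ℝ g (LieAlgebra.ad ℝ g (L01 x y)) := by
    have hL : LinearMap.trace ℝ g (L01.flip (L01 x y))
        = LinearMap.trace ℝ g (L01.flip y ∘ₗ L01.flip x) := by
      rw [hRv, map_add, map_sub, tmc (L01.flip y) (L01 x)]
      ring
    have hR1 : L01.flip y ∘ₗ L01.flip x
        = (L01 y - LieAlgebra.ad ℝ g y) ∘ₗ (L01 x - LieAlgebra.ad ℝ g x) := by
      rw [hflipL, hflipL]
    have hexp : LinearMap.trace ℝ g (L01.flip y ∘ₗ L01.flip x)
        = LinearMap.trace ℝ g (L01 y ∘ₗ L01 x)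
          - LinearMap.trace ℝ g (L01 y ∘ₗ LieAlgebra.ad ℝ g x)
          - LinearMap.trace ℝ g (LieAlgebra.ad ℝ g y ∘ₗ L01 x)
          + LinearMap.trace ℝ g (LieAlgebra.ad ℝ g y ∘ₗ LieAlgebra.ad ℝ g x) := by
      rw [hR1, LinearMap.sub_comp, LinearMap.comp_sub, LinearMap.comp_sub, map_sub, map_sub,
        map_sub]
      ring
    have hLval : LinearMap.trace ℝ g (L01.flip (L01 x y))
        = - 2 * LinearMap.trace ℝ g (LieAlgebra.ad ℝ g (L01 x y)) := by
      rw [hflipL, map_sub, trL01]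
      ring
    have c1 := tmc (L01 y) (L01 x)
    have c2 := tmc (LieAlgebra.ad ℝ g y) (L01 x)
    have c3 := tmc (LieAlgebra.ad ℝ g y) (LieAlgebra.ad ℝ g x)
    linarith
  -- value of s
  have hsval : LinearMap.trace ℝ g (LieAlgebra.ad ℝ g (L01 x y)) = - ω x ⁅u, y⁆ := by
    have h1 := (hu (L01 x y)).symm
    have h2 := hskew u (L01 x y)
    have h3 := hLdef x y u
    have h4 := hcocycle x u y
    have h5 : ω ⁅y, x⁆ u = 0 := by
      have a1 := hskew ⁅y, x⁆ u
      have a2 := hu ⁅y, x⁆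
      have a3 := trad_br y x
      linarith
    have h6 := hskew y ⁅x, u⁆
    have h7 := hskew x ⁅u, y⁆
    linarith
  -- structural rewriting of Ls
  have hLsx : Ls x = (1/3 : ℝ) • (L01 x + LieAlgebra.ad ℝ g x) := by
    ext z
    simp only [hLs, LinearMap.smul_apply, LinearMap.add_apply, LieAlgebra.ad_apply]
  have hLsflip : ∀ q : g, Ls.flip q
      = (1/3 : ℝ) • (L01 q - (2 : ℝ) • LieAlgebra.ad ℝ g q) := by
    intro q
    ext z
    simp only [LinearMap.flip_apply, hLs, LinearMap.smul_apply, LinearMap.sub_apply,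
      LieAlgebra.ad_apply]
    rw [F1 z q, hls z q]
    module
  have hflip3 : Ls.flip (Ls x y) = (1/9 : ℝ) •
      (L01 (L01 x y) - (2 : ℝ) • LieAlgebra.ad ℝ g (L01 x y)
        + L01 ⁅x, y⁆ - (2 : ℝ) • LieAlgebra.ad ℝ g ⁅x, y⁆) := by
    rw [hLs x y, map_smul, map_add, hLsflip (L01 x y), hLsflip ⁅x, y⁆]
    module
  -- assemble
  rw [hflip3, hLsx, hLsflip y]
  simp only [LinearMap.smul_comp, LinearMap.comp_smul, LinearMap.add_comp, LinearMap.comp_add,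
    LinearMap.sub_comp, LinearMap.comp_sub, map_smul, map_sub, map_add, smul_eq_mul]
  have c1 := tmc (LieAlgebra.ad ℝ g x) (L01 y)
  have c2 := tmc (LieAlgebra.ad ℝ g x) (LieAlgebra.ad ℝ g y)
  have c3 := trL01 (L01 x y)
  have c4 := trL01 ⁅x, y⁆
  have c5 := trad_br x y
  have c6 := tmc (L01 x) (LieAlgebra.ad ℝ g y)
  linarith [trAB, trBa, hQKs, hsval, c1, c2, c3, c4, c5, c6]
end

section
/- Let (g, ω) be a symplectic Lie algebra with g unimodular (tr(ad_x) = 0 for all x). Then the Ricci curvature ric^s(x,y) = tr(z ↦ K^s(x,z)y) of the natural symplectic connection L^s = (1/3)(L^{0,1} + ad) vanishes identically if and only if the Killing form of g vanishes identically. -/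
open LinearMap

/-- Trace of a map equals trace of its ω-adjoint, for ω nondegenerate. -/
lemma trace_adjoint_aux {g : Type*} [AddCommGroup g] [Module ℝ g] [Module.Finite ℝ g]
    (ω : g →ₗ[ℝ] g →ₗ[ℝ] ℝ)
    (hnondeg : ∀ x : g, (∀ y : g, ω x y = 0) → x = 0)
    (T S : g →ₗ[ℝ] g) (h : ∀ z w, ω (T z) w = ω z (S w)) :
    LinearMap.trace ℝ g T = LinearMap.trace ℝ g S := by
  have hinj : Function.Injective ω := by
    rw [injective_iff_map_eq_zero]
    intro v hv
    exact hnondeg v (fun w => by rw [hv]; rfl)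
  let e : g ≃ₗ[ℝ] Module.Dual ℝ g :=
    LinearMap.linearEquivOfInjective ω hinj Subspace.dual_finrank_eq.symm
  have he : ∀ v, e v = ω v := fun v => rfl
  have hc : e.conj T = S.dualMap := by
    apply LinearMap.ext
    intro φ
    have hφ : φ = e (e.symm φ) := (e.apply_symm_apply φ).symm
    rw [LinearEquiv.conj_apply, LinearMap.comp_apply, LinearMap.comp_apply]
    rw [hφ]
    simp only [LinearEquiv.coe_coe, LinearEquiv.symm_apply_apply]
    set v := e.symm φ
    rw [he, he]
    apply LinearMap.ext
    intro w
    exact h v w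
  have htd : LinearMap.trace ℝ (Module.Dual ℝ g) S.dualMap = LinearMap.trace ℝ g S := by
    let B := Module.finBasis ℝ g
    rw [LinearMap.trace_eq_matrix_trace ℝ B.dualBasis, LinearMap.trace_eq_matrix_trace ℝ B]
    rw [LinearMap.dualMap_def, LinearMap.toMatrix_transpose, Matrix.trace_transpose]
  rw [← LinearMap.trace_conj' T e, hc, htd]

/-- on a unimodular symplectic Lie algebra, the natural symplectic
connection is Ricci-flat iff the Killing form vanishes. -/
theorem stmt16 {g : Type*} [LieRing g] [LieAlgebra ℝ g] [Module.Finite ℝ g]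
    (ω : g →ₗ[ℝ] g →ₗ[ℝ] ℝ)
    (hskew : ∀ x y : g, ω x y = - ω y x)
    (hnondeg : ∀ x : g, (∀ y : g, ω x y = 0) → x = 0)
    (hcocycle : ∀ x y z : g, ω ⁅x, y⁆ z + ω ⁅z, x⁆ y + ω ⁅y, z⁆ x = 0)
    (L01 : g →ₗ[ℝ] g →ₗ[ℝ] g)
    (hLdef : ∀ x y z : g, ω (L01 x y) z = - ω y ⁅x, z⁆)
    (Ls : g →ₗ[ℝ] g →ₗ[ℝ] g)
    (hLs : ∀ x y : g, Ls x y = (1/3 : ℝ) • (L01 x y + ⁅x, y⁆))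
    (hunimod : ∀ x : g, LinearMap.trace ℝ g (LieAlgebra.ad ℝ g x) = 0) :
    (∀ x y : g,
      LinearMap.trace ℝ g
          ((Ls x) ∘ₗ (Ls.flip y) - Ls.flip (Ls x y) - (Ls.flip y) ∘ₗ (LieAlgebra.ad ℝ g x)) = 0) ↔
    (∀ x y : g,
      LinearMap.trace ℝ g ((LieAlgebra.ad ℝ g x) ∘ₗ (LieAlgebra.ad ℝ g y)) = 0) := by
  set ad := LieAlgebra.ad ℝ g with had
  set tr := LinearMap.trace ℝ g with htr
  have adap : ∀ x z : g, ad x z = ⁅x, z⁆ := fun x z => rfl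
  have lsk : ∀ a b : g, ⁅a, b⁆ = -⁅b, a⁆ := fun a b => neg_eq_iff_eq_neg.mp (lie_skew b a)
  have tradj := trace_adjoint_aux ω hnondeg
  -- ω ⁅x,z⁆ w = - ω z (L01 x w)
  have h1 : ∀ x z w : g, ω ⁅x, z⁆ w = - ω z (L01 x w) := by
    intro x z w
    have h2 := hLdef x w z
    have h3 := hskew ⁅x, z⁆ w
    have h4 := hskew (L01 x w) z
    linarith
  -- L01 x z - L01 z x = ⁅x,z⁆
  have hsub : ∀ x z : g, L01 x z - L01 z x = ⁅x, z⁆ := by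
    intro x z
    have key : ∀ w : g, ω (L01 x z - L01 z x - ⁅x, z⁆) w = 0 := by
      intro w
      have e1 : ω (L01 x z - L01 z x - ⁅x, z⁆) w
          = ω (L01 x z) w - ω (L01 z x) w - ω ⁅x, z⁆ w := by
        simp [map_sub]
      have e2 := hLdef x z w
      have e3 := hLdef z x w
      have e4 := hcocycle x z w
      have e5 : ω ⁅w, x⁆ z = ω z ⁅x, w⁆ := by
        rw [hskew ⁅w, x⁆ z, lsk w x, map_neg, neg_neg]
      have e6 : ω ⁅z, w⁆ x = - ω x ⁅z, w⁆ := hskew _ _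
      rw [e1, e2, e3]
      linarith
    exact sub_eq_zero.mp (hnondeg _ key)
  have hsub' : ∀ x z : g, L01 x z = ⁅x, z⁆ + L01 z x := by
    intro x z
    have h0 := hsub x z
    rw [← h0]; abel
  have hsub'' : ∀ x z : g, L01 z x = L01 x z - ⁅x, z⁆ := by
    intro x z
    have h0 := hsub x z
    rw [← h0]; abel
  -- self-adjointness of L01.flip x
  have hselfadj : ∀ x z w : g, ω (L01 z x) w = ω z (L01 x w) - ω z ⁅x, w⁆ := by
    intro x z w
    have e2 := hLdef z x w
    have e4 := hcocycle z w x
    have e5 := h1 x z w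
    have e6 : ω ⁅w, x⁆ z = ω z ⁅x, w⁆ := by
      rw [hskew ⁅w, x⁆ z, lsk w x, map_neg, neg_neg]
    have e7 : ω ⁅z, w⁆ x = - ω x ⁅z, w⁆ := hskew _ _
    have e8 : ω ⁅x, z⁆ w = - ω ⁅z, x⁆ w := by
      rw [lsk x z, map_neg, LinearMap.neg_apply]
    linarith
  -- flatness
  have hflat : ∀ x y z : g, L01 ⁅x, y⁆ z = L01 x (L01 y z) - L01 y (L01 x z) := by
    intro x y z
    have key : ∀ w : g, ω (L01 ⁅x, y⁆ z - (L01 x (L01 y z) - L01 y (L01 x z))) w = 0 := by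
      intro w
      have e1 : ω (L01 ⁅x, y⁆ z - (L01 x (L01 y z) - L01 y (L01 x z))) w
          = ω (L01 ⁅x, y⁆ z) w - ω (L01 x (L01 y z)) w + ω (L01 y (L01 x z)) w := by
        simp [map_sub]; ring
      have e2 := hLdef ⁅x, y⁆ z w
      have e3 := hLdef x (L01 y z) w
      have e4 := hLdef y z ⁅x, w⁆
      have e5 := hLdef y (L01 x z) w
      have e6 := hLdef x z ⁅y, w⁆
      have e8 : ω z ⁅⁅x, y⁆, w⁆ = ω z ⁅x, ⁅y, w⁆⁆ - ω z ⁅y, ⁅x, w⁆⁆ := by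
        rw [lie_lie, map_sub]
      rw [e1, e2, e3, e5]
      linarith
    exact sub_eq_zero.mp (hnondeg _ key)
  -- map-level identities
  have MsubA : ∀ x : g, L01 x = ad x + L01.flip x := by
    intro x
    apply LinearMap.ext; intro z
    simp only [LinearMap.add_apply, LinearMap.flip_apply, adap]
    exact hsub' x z
  have Mflat : ∀ x y : g, L01.flip x ∘ₗ ad y = L01 y ∘ₗ L01.flip x - L01.flip (L01 y x) := by
    intro x y
    apply LinearMap.ext; intro z
    simp only [LinearMap.comp_apply, LinearMap.sub_apply, LinearMap.flip_apply, adap]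
    exact hflat y z x
  -- trace lemmas
  have trL01 : ∀ x : g, tr (L01 x) = 0 := by
    intro x
    have h0 : tr (L01 x) = tr (-(ad x)) := by
      apply tradj
      intro z w
      rw [hLdef x z w]
      simp only [LinearMap.neg_apply, map_neg, adap]
    rw [h0, map_neg, hunimod]; ring
  have trflip : ∀ x : g, tr (L01.flip x) = 0 := by
    intro x
    have hx : L01.flip x = L01 x - ad x := by
      rw [MsubA x]; abel
    rw [hx, map_sub, trL01, hunimod]; ring
  have trγ : ∀ x y : g, tr (L01.flip x ∘ₗ ad y) = 0 := by
    intro x y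
    have h2 : tr (L01 y ∘ₗ L01.flip x) = tr (-(L01.flip x ∘ₗ ad y)) := by
      apply tradj
      intro z w
      simp only [LinearMap.comp_apply, LinearMap.flip_apply, LinearMap.neg_apply, map_neg, adap]
      have e1 := hLdef y (L01 z x) w
      have e2 := hselfadj x z ⁅y, w⁆
      have e3 : L01 ⁅y, w⁆ x = L01 x ⁅y, w⁆ - ⁅x, ⁅y, w⁆⁆ := hsub'' x ⁅y, w⁆
      rw [e1, e3, map_sub]
      linarith
    have h4 : tr (L01.flip x ∘ₗ ad y) = tr (L01 y ∘ₗ L01.flip x) - tr (L01.flip (L01 y x)) := by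
      rw [Mflat x y, map_sub]
    rw [trflip] at h4
    rw [map_neg] at h2
    linarith
  have trβ : ∀ x y : g, tr (L01 x ∘ₗ ad y) = tr (ad x ∘ₗ ad y) := by
    intro x y
    have h0 : L01 x ∘ₗ ad y = ad x ∘ₗ ad y + L01.flip x ∘ₗ ad y := by
      rw [MsubA x, LinearMap.add_comp]
    rw [h0, map_add, trγ, add_zero]
  have tr4 : ∀ x y : g, tr (L01 x ∘ₗ L01.flip y) = 0 := by
    intro x y
    have h2 : tr (L01 x ∘ₗ L01.flip y) = tr (-(L01.flip y ∘ₗ ad x)) := by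
      apply tradj
      intro z w
      simp only [LinearMap.comp_apply, LinearMap.flip_apply, LinearMap.neg_apply, map_neg, adap]
      have e1 := hLdef x (L01 z y) w
      have e2 := hselfadj y z ⁅x, w⁆
      have e3 : L01 ⁅x, w⁆ y = L01 y ⁅x, w⁆ - ⁅y, ⁅x, w⁆⁆ := hsub'' y ⁅x, w⁆
      rw [e1, e3, map_sub]
      linarith
    rw [h2, map_neg, trγ]; ring
  have trcomm : ∀ (f h : g →ₗ[ℝ] g), tr (f ∘ₗ h) = tr (h ∘ₗ f) := by
    intro f h
    exact LinearMap.trace_mul_comm ℝ f h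
  have tr5 : ∀ x y : g, tr (ad x ∘ₗ L01.flip y) = 0 := by
    intro x y
    rw [trcomm, trγ]
  -- structure of Ls
  have hLsx : ∀ x : g, Ls x = (1/3 : ℝ) • (L01 x + ad x) := by
    intro x
    apply LinearMap.ext; intro z
    rw [hLs x z]
    simp [adap]
  have hLsflip : ∀ y : g, Ls.flip y = (1/3 : ℝ) • (L01.flip y - ad y) := by
    intro y
    apply LinearMap.ext; intro z
    simp only [LinearMap.flip_apply, LinearMap.smul_apply, LinearMap.sub_apply, adap]
    rw [hLs z y, lsk z y, ← sub_eq_add_neg]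
  have trLsflip : ∀ a : g, tr (Ls.flip a) = 0 := by
    intro a
    rw [hLsflip a, map_smul, map_sub, trflip, hunimod]
    simp
  -- main computation
  have main : ∀ x y : g,
      tr ((Ls x) ∘ₗ (Ls.flip y) - Ls.flip (Ls x y) - (Ls.flip y) ∘ₗ ad x)
        = (1/9 : ℝ) * tr (ad x ∘ₗ ad y) := by
    intro x y
    rw [map_sub, map_sub, trLsflip, sub_zero]
    have hA : tr ((Ls x) ∘ₗ (Ls.flip y))
        = (1/9 : ℝ) * (0 - tr (ad x ∘ₗ ad y) + 0 - tr (ad x ∘ₗ ad y)) := by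
      rw [hLsx x, hLsflip y]
      rw [LinearMap.smul_comp, LinearMap.comp_smul, map_smul, map_smul]
      rw [LinearMap.add_comp, LinearMap.comp_sub, LinearMap.comp_sub]
      rw [map_add, map_sub, map_sub]
      rw [tr4, trβ, tr5]
      simp only [smul_eq_mul]
      ring
    have hB : tr ((Ls.flip y) ∘ₗ ad x) = (1/3 : ℝ) * (0 - tr (ad x ∘ₗ ad y)) := by
      rw [hLsflip y, LinearMap.smul_comp, map_smul]
      rw [LinearMap.sub_comp, map_sub, trγ]
      rw [trcomm (ad y) (ad x)]
      simp only [smul_eq_mul]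
    rw [hA, hB]
    ring
  constructor
  · intro h x y
    have h1 := main x y
    rw [h x y] at h1
    linarith
  · intro h x y
    rw [main x y, h x y]
    ring
end

section
/- Let g = h ⊕ m with [h,m] ⊆ m, equipped with an ad(g)-invariant inner product ⟨·,·⟩ with m = h^⊥, and a nondegenerate skew ad(h)-invariant 2-cocycle ω on m. Let W : m → m be defined by ω(x,y) = ⟨W(x), y⟩. Then: (i) W is skew-symmetric for ⟨·,·⟩; (ii) [W, L^{1,0}_x] = L^{1,0}_{W(x)} for all x ∈ m, where L^{1,0}_x(y) = [x,y]_m. -/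
/-- in the compact-type setting, W is skew-symmetric for the invariant
inner product, and [W, L^{1,0}_x] = L^{1,0}_{W(x)} on m. -/
theorem stmt17 {g : Type*} [LieRing g] [LieAlgebra ℝ g]
    (B : g →ₗ[ℝ] g →ₗ[ℝ] ℝ)
    (hBsymm : ∀ x y : g, B x y = B y x)
    (hBpos : ∀ x : g, x ≠ 0 → 0 < B x x)
    (hBinv : ∀ z x y : g, B ⁅z, x⁆ y + B x ⁅z, y⁆ = 0)
    (h m : Submodule ℝ g)
    (hsub : ∀ u ∈ h, ∀ v ∈ h, ⁅u, v⁆ ∈ h)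
    (hperp : ∀ x : g, x ∈ m ↔ ∀ u ∈ h, B x u = 0)
    (hcompl : IsCompl h m)
    (hbr : ∀ u ∈ h, ∀ x ∈ m, ⁅u, x⁆ ∈ m)
    (pm : g →ₗ[ℝ] g) (hpm_mem : ∀ x, pm x ∈ m)
    (hpm_m : ∀ x ∈ m, pm x = x) (hpm_h : ∀ x ∈ h, pm x = 0)
    (ω : g →ₗ[ℝ] g →ₗ[ℝ] ℝ)
    (hskew : ∀ x ∈ m, ∀ y ∈ m, ω x y = - ω y x)
    (hnondeg : ∀ x ∈ m, (∀ y ∈ m, ω x y = 0) → x = 0)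
    (hcocycle : ∀ x ∈ m, ∀ y ∈ m, ∀ z ∈ m,
      ω (pm ⁅x, y⁆) z + ω (pm ⁅z, x⁆) y + ω (pm ⁅y, z⁆) x = 0)
    (hinvh : ∀ u ∈ h, ∀ x ∈ m, ∀ y ∈ m, ω ⁅u, x⁆ y + ω x ⁅u, y⁆ = 0)
    (W : g →ₗ[ℝ] g) (hWmem : ∀ x ∈ m, W x ∈ m)
    (hW : ∀ x ∈ m, ∀ y ∈ m, ω x y = B (W x) y) :
    (∀ x ∈ m, ∀ y ∈ m, B (W x) y = - B x (W y)) ∧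
    (∀ x ∈ m, ∀ y ∈ m, W (pm ⁅x, y⁆) - pm ⁅x, W y⁆ = pm ⁅W x, y⁆) := by
  -- B (pm u) z = B u z for z ∈ m
  have hpmB : ∀ (u : g), ∀ z ∈ m, B (pm u) z = B u z := by
    intro u z hz
    obtain ⟨a, b, ha, hb, rfl⟩ :=
      Submodule.codisjoint_iff_exists_add_eq.mp hcompl.codisjoint u
    have : pm (a + b) = b := by
      rw [map_add, hpm_h a ha, hpm_m b hb, zero_add]
    rw [this, map_add]
    have hBa : B a z = 0 := by rw [hBsymm]; exact (hperp z).mp hz a ha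
    simp [hBa]
  constructor
  · intro x hx y hy
    rw [← hW x hx y hy, hskew x hx y hy, hW y hy x hx, hBsymm]
  · intro x hx y hy
    set v : g := W (pm ⁅x, y⁆) - pm ⁅x, W y⁆ - pm ⁅W x, y⁆ with hv
    have hvm : v ∈ m :=
      Submodule.sub_mem m (Submodule.sub_mem m (hWmem _ (hpm_mem _)) (hpm_mem _)) (hpm_mem _)
    have key : ∀ z ∈ m, B v z = 0 := by
      intro z hz
      have hWx := hWmem x hx
      have hWy := hWmem y hy
      -- term 1
      have t1 : B (W (pm ⁅x, y⁆)) z = - ω (pm ⁅z, x⁆) y - ω (pm ⁅y, z⁆) x := by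
        rw [← hW _ (hpm_mem _) z hz]
        have := hcocycle x hx y hy z hz
        linarith
      -- term 2
      have t2 : B (pm ⁅x, W y⁆) z = - ω (pm ⁅z, x⁆) y := by
        rw [hpmB _ z hz]
        have h1 := hBinv x (W y) z
        have h3 := hpmB ⁅x, z⁆ (W y) hWy
        have hsy1 := hBsymm (W y) ⁅x, z⁆
        have hsy2 := hBsymm (pm ⁅x, z⁆) (W y)
        have h4 : B (W y) (pm ⁅x, z⁆) = ω y (pm ⁅x, z⁆) := (hW y hy _ (hpm_mem _)).symm
        have h5 := hskew y hy (pm ⁅x, z⁆) (hpm_mem _)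
        have h7 : ω (pm ⁅x, z⁆) y = - ω (pm ⁅z, x⁆) y := by
          rw [show (⁅x, z⁆ : g) = -⁅z, x⁆ from (lie_skew x z).symm]
          simp only [map_neg, LinearMap.neg_apply]
        linarith
      -- term 3
      have t3 : B (pm ⁅W x, y⁆) z = - ω (pm ⁅y, z⁆) x := by
        rw [hpmB _ z hz]
        have h' := hBinv y (W x) z
        have hsw : B ⁅W x, y⁆ z = - B ⁅y, W x⁆ z := by
          rw [show (⁅W x, y⁆ : g) = -⁅y, W x⁆ from (lie_skew (W x) y).symm]
          simp only [map_neg, LinearMap.neg_apply]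
        have h3 := hpmB ⁅y, z⁆ (W x) hWx
        have hsy1 := hBsymm (W x) ⁅y, z⁆
        have hsy2 := hBsymm (pm ⁅y, z⁆) (W x)
        have h4 : B (W x) (pm ⁅y, z⁆) = ω x (pm ⁅y, z⁆) := (hW x hx _ (hpm_mem _)).symm
        have h5 := hskew x hx (pm ⁅y, z⁆) (hpm_mem _)
        linarith
      have : B v z = B (W (pm ⁅x, y⁆)) z - B (pm ⁅x, W y⁆) z - B (pm ⁅W x, y⁆) z := by
        simp [hv, map_sub]
      rw [this, t1, t2, t3]
      ring
    have hv0 : v = 0 := by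
      by_contra hne
      have := hBpos v hne
      have := key v hvm
      linarith
    have : W (pm ⁅x, y⁆) - pm ⁅x, W y⁆ - pm ⁅W x, y⁆ = 0 := hv0
    linear_combination (norm := module) this
end

section
/- With the setup of a compact-type reductive decomposition (ad(g)-invariant inner product, m = h^⊥, ω nondegenerate skew 2-cocycle on m, W defined by ω(x,y) = ⟨W x, y⟩), if the endomorphism W anticommutes with every L^{1,0}_x (i.e., L^{1,0}_x ∘ W = −W ∘ L^{1,0}_x for all x ∈ m), then [m,m]_m = 0, i.e., [x,y]_m = 0 for all x, y ∈ m. -/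
/-- if W anticommutes with every L^{1,0}_x, then [m,m]_m = 0. -/
theorem stmt18 {g : Type*} [LieRing g] [LieAlgebra ℝ g]
    (B : g →ₗ[ℝ] g →ₗ[ℝ] ℝ)
    (hBsymm : ∀ x y : g, B x y = B y x)
    (hBpos : ∀ x : g, x ≠ 0 → 0 < B x x)
    (hBinv : ∀ z x y : g, B ⁅z, x⁆ y + B x ⁅z, y⁆ = 0)
    (h m : Submodule ℝ g)
    (hsub : ∀ u ∈ h, ∀ v ∈ h, ⁅u, v⁆ ∈ h)
    (hperp : ∀ x : g, x ∈ m ↔ ∀ u ∈ h, B x u = 0)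
    (hcompl : IsCompl h m)
    (hbr : ∀ u ∈ h, ∀ x ∈ m, ⁅u, x⁆ ∈ m)
    (pm : g →ₗ[ℝ] g) (hpm_mem : ∀ x, pm x ∈ m)
    (hpm_m : ∀ x ∈ m, pm x = x) (hpm_h : ∀ x ∈ h, pm x = 0)
    (ω : g →ₗ[ℝ] g →ₗ[ℝ] ℝ)
    (hskew : ∀ x ∈ m, ∀ y ∈ m, ω x y = - ω y x)
    (hnondeg : ∀ x ∈ m, (∀ y ∈ m, ω x y = 0) → x = 0)
    (hcocycle : ∀ x ∈ m, ∀ y ∈ m, ∀ z ∈ m,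
      ω (pm ⁅x, y⁆) z + ω (pm ⁅z, x⁆) y + ω (pm ⁅y, z⁆) x = 0)
    (hinvh : ∀ u ∈ h, ∀ x ∈ m, ∀ y ∈ m, ω ⁅u, x⁆ y + ω x ⁅u, y⁆ = 0)
    (W : g →ₗ[ℝ] g) (hWmem : ∀ x ∈ m, W x ∈ m)
    (hW : ∀ x ∈ m, ∀ y ∈ m, ω x y = B (W x) y)
    (hWinj : ∀ x ∈ m, W x = 0 → x = 0)
    (hanti : ∀ x ∈ m, ∀ y ∈ m, pm ⁅x, W y⁆ = - W (pm ⁅x, y⁆)) :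
    ∀ x ∈ m, ∀ y ∈ m, pm ⁅x, y⁆ = 0 := by
  -- x - pm x ∈ h for every x
  have hproj : ∀ x : g, x - pm x ∈ h := by
    intro x
    have hx : x ∈ h ⊔ m := by
      rw [hcompl.codisjoint.eq_top]; trivial
    obtain ⟨a, ha, b, hb, hab⟩ := Submodule.mem_sup.mp hx
    have : pm x = b := by
      rw [← hab, map_add, hpm_h a ha, hpm_m b hb, zero_add]
    rw [this, ← hab]
    simpa using ha
  -- B of m-element against h-element vanishes (both orders)
  have horth : ∀ c ∈ m, ∀ u ∈ h, B u c = 0 := by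
    intro c hc u hu
    rw [hBsymm]
    exact (hperp c).mp hc u hu
  -- key: B (pm w) c = B w c for c ∈ m
  have hkey : ∀ c ∈ m, ∀ w : g, B (pm w) c = B w c := by
    intro c hc w
    have h0 : B (w - pm w) c = 0 := horth c hc _ (hproj w)
    have : B w c - B (pm w) c = 0 := by
      simpa [map_sub, LinearMap.sub_apply] using h0
    linarith
  -- key relation: ω (pm ⁅a,b⁆) c = ω b (pm ⁅a,c⁆)
  have R : ∀ a ∈ m, ∀ b ∈ m, ∀ c ∈ m, ω (pm ⁅a, b⁆) c = ω b (pm ⁅a, c⁆) := by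
    intro a ha b hb c hc
    have h1 : ω (pm ⁅a, b⁆) c = B (W (pm ⁅a, b⁆)) c := hW _ (hpm_mem _) c hc
    have h2 : W (pm ⁅a, b⁆) = - pm ⁅a, W b⁆ := by
      rw [hanti a ha b hb, neg_neg]
    have h3 : B (pm ⁅a, W b⁆) c = B ⁅a, W b⁆ c := hkey c hc _
    have h4 : B ⁅a, W b⁆ c + B (W b) ⁅a, c⁆ = 0 := hBinv a (W b) c
    have h5 : B (W b) ⁅a, c⁆ = B (W b) (pm ⁅a, c⁆) := by
      rw [hBsymm, hBsymm (W b), ← hkey (W b) (hWmem b hb) ⁅a, c⁆]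
    have h6 : ω b (pm ⁅a, c⁆) = B (W b) (pm ⁅a, c⁆) := hW b hb _ (hpm_mem _)
    have h7 : B (W (pm ⁅a, b⁆)) c = - B (pm ⁅a, W b⁆) c := by
      rw [h2]; simp
    rw [h1, h7, h3, h6, ← h5]
    linarith
  -- pm is odd in the bracket
  have hpmneg : ∀ a b : g, pm ⁅a, b⁆ = - pm ⁅b, a⁆ := by
    intro a b
    rw [← lie_skew, map_neg]
  intro x hx y hy
  apply hnondeg _ (hpm_mem _)
  intro z hz
  have hc := hcocycle x hx y hy z hz
  have t2 : ω (pm ⁅z, x⁆) y = ω (pm ⁅y, z⁆) x := by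
    rw [R z hz x hx y hy, hpmneg z y, map_neg, hskew x hx _ (hpm_mem _)]
    ring
  have t3 : ω (pm ⁅y, z⁆) x = ω (pm ⁅x, y⁆) z := by
    rw [R y hy z hz x hx, hpmneg y x, map_neg, hskew z hz _ (hpm_mem _)]
    ring
  rw [t2, t3] at hc
  linarith
end

section
/- In the 6-dimensional real Lie algebra r₆ with basis e₁,…,e₆ and nonzero brackets [e₁,e₅]=e₂, [e₂,e₅]=e₁, [e₃,e₅]=e₄, [e₄,e₅]=−e₃ (extended by skew-symmetry, all other brackets zero): r₆ is a solvable unimodular Lie algebra, ω := e₁*∧e₂* + e₃*∧e₄* + e₅*∧e₆* is a nondegenerate 2-cocycle on r₆, and the Killing form of r₆ vanishes identically. -/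
set_option maxHeartbeats 2000000


/-- the 6-dimensional Lie algebra r₆ with brackets
[e₁,e₅]=e₂, [e₂,e₅]=e₁, [e₃,e₅]=e₄, [e₄,e₅]=−e₃ (all others zero) is solvable and
unimodular, ω = e₁*∧e₂* + e₃*∧e₄* + e₅*∧e₆* is a nondegenerate 2-cocycle on it,
and its Killing form vanishes identically. -/
theorem stmt19 {g : Type*} [LieRing g] [LieAlgebra ℝ g] (e : Module.Basis (Fin 6) ℝ g)
    (h15 : ⁅e 0, e 4⁆ = e 1) (h25 : ⁅e 1, e 4⁆ = e 0)
    (h35 : ⁅e 2, e 4⁆ = e 3) (h45 : ⁅e 3, e 4⁆ = - e 2)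
    (h65 : ⁅e 5, e 4⁆ = 0)
    (hz : ∀ i j : Fin 6, i ≠ 4 → j ≠ 4 → ⁅e i, e j⁆ = 0) :
    LieAlgebra.IsSolvable g ∧
    (∀ x : g, LinearMap.trace ℝ g (LieAlgebra.ad ℝ g x) = 0) ∧
    (∀ x : g, (∀ y : g,
        (e.coord 0 x * e.coord 1 y - e.coord 1 x * e.coord 0 y) +
        (e.coord 2 x * e.coord 3 y - e.coord 3 x * e.coord 2 y) +
        (e.coord 4 x * e.coord 5 y - e.coord 5 x * e.coord 4 y) = 0) → x = 0) ∧
    (∀ x y z : g,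
        ((e.coord 0 ⁅x, y⁆ * e.coord 1 z - e.coord 1 ⁅x, y⁆ * e.coord 0 z) +
         (e.coord 2 ⁅x, y⁆ * e.coord 3 z - e.coord 3 ⁅x, y⁆ * e.coord 2 z) +
         (e.coord 4 ⁅x, y⁆ * e.coord 5 z - e.coord 5 ⁅x, y⁆ * e.coord 4 z)) +
        ((e.coord 0 ⁅z, x⁆ * e.coord 1 y - e.coord 1 ⁅z, x⁆ * e.coord 0 y) +
         (e.coord 2 ⁅z, x⁆ * e.coord 3 y - e.coord 3 ⁅z, x⁆ * e.coord 2 y) +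
         (e.coord 4 ⁅z, x⁆ * e.coord 5 y - e.coord 5 ⁅z, x⁆ * e.coord 4 y)) +
        ((e.coord 0 ⁅y, z⁆ * e.coord 1 x - e.coord 1 ⁅y, z⁆ * e.coord 0 x) +
         (e.coord 2 ⁅y, z⁆ * e.coord 3 x - e.coord 3 ⁅y, z⁆ * e.coord 2 x) +
         (e.coord 4 ⁅y, z⁆ * e.coord 5 x - e.coord 5 ⁅y, z⁆ * e.coord 4 x)) = 0) ∧
    (∀ x y : g, LinearMap.trace ℝ g
        ((LieAlgebra.ad ℝ g x) ∘ₗ (LieAlgebra.ad ℝ g y)) = 0) := by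
  have h51 : ⁅e 4, e 0⁆ = -(e 1) := by rw [← lie_skew, h15]
  have h52 : ⁅e 4, e 1⁆ = -(e 0) := by rw [← lie_skew, h25]
  have h53 : ⁅e 4, e 2⁆ = -(e 3) := by rw [← lie_skew, h35]
  have h54 : ⁅e 4, e 3⁆ = e 2 := by rw [← lie_skew, h45]; simp
  have h56 : ⁅e 4, e 5⁆ = 0 := by rw [← lie_skew, h65]; simp
  have brkt : ∀ x y : g, ⁅x, y⁆ =
      (e.repr x 1 * e.repr y 4 - e.repr x 4 * e.repr y 1) • e 0 +
      (e.repr x 0 * e.repr y 4 - e.repr x 4 * e.repr y 0) • e 1 +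
      (e.repr x 4 * e.repr y 3 - e.repr x 3 * e.repr y 4) • e 2 +
      (e.repr x 2 * e.repr y 4 - e.repr x 4 * e.repr y 2) • e 3 := by
    intro x y
    conv_lhs => rw [← e.sum_repr x, ← e.sum_repr y]
    simp only [Fin.sum_univ_six, add_lie, lie_add, smul_lie, lie_smul]
    simp [Finsupp.linearCombination_apply, Finsupp.sum_fintype, Fin.sum_univ_six,
      add_lie, lie_add, smul_lie, lie_smul, h15, h25, h35, h45, h65,
      h51, h52, h53, h54, h56, hz 0 1, hz 0 2, hz 0 3, hz 0 5, hz 1 0, hz 1 2, hz 1 3, hz 1 5,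
      hz 2 0, hz 2 1, hz 2 3, hz 2 5, hz 3 0, hz 3 1, hz 3 2, hz 3 5,
      hz 5 0, hz 5 1, hz 5 2, hz 5 3, hz 5 5, hz 0 0, hz 1 1, hz 2 2, hz 3 3]
    module
  have crd : ∀ (k : Fin 6) (x y : g), e.repr ⁅x, y⁆ k =
      (e.repr x 1 * e.repr y 4 - e.repr x 4 * e.repr y 1) * (if (0:Fin 6) = k then 1 else 0) +
      (e.repr x 0 * e.repr y 4 - e.repr x 4 * e.repr y 0) * (if (1:Fin 6) = k then 1 else 0) +
      (e.repr x 4 * e.repr y 3 - e.repr x 3 * e.repr y 4) * (if (2:Fin 6) = k then 1 else 0) +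
      (e.repr x 2 * e.repr y 4 - e.repr x 4 * e.repr y 2) * (if (3:Fin 6) = k then 1 else 0) := by
    intro k x y
    rw [brkt x y]
    simp only [map_add, map_smul, e.repr_self, Finsupp.smul_single, smul_eq_mul, mul_one,
      Finsupp.add_apply, Finsupp.single_apply]
    split_ifs <;> ring
  have crd0 : ∀ x y : g, e.repr ⁅x, y⁆ 0 =
      e.repr x 1 * e.repr y 4 - e.repr x 4 * e.repr y 1 := by
    intro x y; rw [crd]; simp
  have crd1 : ∀ x y : g, e.repr ⁅x, y⁆ 1 =
      e.repr x 0 * e.repr y 4 - e.repr x 4 * e.repr y 0 := by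
    intro x y; rw [crd]; simp
  have crd2 : ∀ x y : g, e.repr ⁅x, y⁆ 2 =
      e.repr x 4 * e.repr y 3 - e.repr x 3 * e.repr y 4 := by
    intro x y; rw [crd]; simp
  have crd3 : ∀ x y : g, e.repr ⁅x, y⁆ 3 =
      e.repr x 2 * e.repr y 4 - e.repr x 4 * e.repr y 2 := by
    intro x y; rw [crd]; simp
  have crd4 : ∀ x y : g, e.repr ⁅x, y⁆ 4 = 0 := by
    intro x y; rw [crd]; simp
  have crd5 : ∀ x y : g, e.repr ⁅x, y⁆ 5 = 0 := by
    intro x y; rw [crd]; simp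
  have hc4 : ∀ x ∈ LieAlgebra.derivedSeries ℝ g 1, e.repr x 4 = 0 := by
    intro x hx
    rw [LieAlgebra.derivedSeries_def, LieAlgebra.derivedSeriesOfIdeal_succ,
      LieAlgebra.derivedSeriesOfIdeal_zero, ← LieSubmodule.mem_toSubmodule,
      LieSubmodule.lieIdeal_oper_eq_linear_span'] at hx
    induction hx using Submodule.span_induction with
    | mem w hw =>
      obtain ⟨a, -, b, -, rfl⟩ := hw
      rw [crd4]
    | zero => simp
    | add a b _ _ ha hb => simp [ha, hb]
    | smul t a _ ha => simp [ha]
  refine ⟨?_, ?_, ?_, ?_, ?_⟩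
  · refine LieAlgebra.IsSolvable.mk (R := ℝ) (k := 2) ?_
    have : LieAlgebra.derivedSeries ℝ g 2 =
        ⁅LieAlgebra.derivedSeries ℝ g 1, LieAlgebra.derivedSeries ℝ g 1⁆ := by
      rw [LieAlgebra.derivedSeries_def, LieAlgebra.derivedSeriesOfIdeal_succ,
        ← LieAlgebra.derivedSeries_def]
    rw [this, LieSubmodule.lie_eq_bot_iff]
    intro a ha b hb
    rw [brkt a b, hc4 a ha, hc4 b hb]
    simp
  · intro x
    rw [LinearMap.trace_eq_matrix_trace ℝ e, Matrix.trace]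
    simp only [Matrix.diag, LinearMap.toMatrix_apply, Fin.sum_univ_six, LieAlgebra.ad_apply,
      crd0, crd1, crd2, crd3, crd4, crd5]
    simp [e.repr_self, Finsupp.single_apply]
  · intro x H
    have h0 := H (e 1); have h1 := H (e 0); have h2 := H (e 3)
    have h3 := H (e 2); have h4 := H (e 5); have h5 := H (e 4)
    simp [Module.Basis.coord_apply, e.repr_self, Finsupp.single_apply] at h0 h1 h2 h3 h4 h5
    refine e.repr.map_eq_zero_iff.mp (Finsupp.ext fun i => ?_)
    fin_cases i
    · exact h0
    · exact h1
    · exact h2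
    · exact h3
    · exact h4
    · exact h5
  · intro x y z
    simp only [Module.Basis.coord_apply, crd0, crd1, crd2, crd3, crd4, crd5]
    ring
  · intro x y
    rw [LinearMap.trace_eq_matrix_trace ℝ e, Matrix.trace]
    simp only [Matrix.diag, LinearMap.toMatrix_apply, Fin.sum_univ_six, LinearMap.comp_apply,
      LieAlgebra.ad_apply]
    simp only [crd0, crd1, crd2, crd3, crd4, crd5]
    simp [e.repr_self, Finsupp.single_apply]
end
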